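/- arXiv:2202.05404 — 10 statements merged into one kernel-verified Lean document; each statement's English description precedes it below -/
import Mathlib

section
/- Let I be a nonempty finite index set, μ : I → ℝ with μ_i > 0 for all i, D = diag(μ), and let P be an I×I real matrix with nonnegative entries whose rows each sum to 1. Let γ ∈ (0,1) and suppose η > max_{i∈I} [ γ (Σ_j μ_j P_{j i}) / (2 μ_i) ] − (2−γ)/2. Define M = D((1+η)I − γP). Then M + Mᵀ is positive definite; equivalently, M is positive definite in the sense that xᵀMx > 0 for all nonzero x. -/
open Matrix

/-- Let `μ : I → ℝ` be positive, `D = diag(μ)`, `P` row-stochastic, `γ ∈ (0,1)` and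
`η > max_i [γ (Σ_j μ_j P_{j i}) / (2 μ_i)] − (2−γ)/2`.  Then `M = D((1+η)I − γP)`
satisfies: `M + Mᵀ` is positive definite, and equivalently `xᵀMx > 0` for all
nonzero `x`. -/
theorem stmt_2 {I : Type*} [Fintype I] [Nonempty I] [DecidableEq I]
    (μ : I → ℝ) (hμ : ∀ i, 0 < μ i)
    (P : Matrix I I ℝ) (hP0 : ∀ i j, 0 ≤ P i j) (hP1 : ∀ i, ∑ j, P i j = 1)
    (γ η : ℝ) (hγ : γ ∈ Set.Ioo (0 : ℝ) 1)
    (hη : η > (Finset.univ.sup' Finset.univ_nonempty fun i =>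
        γ * (∑ j, μ j * P j i) / (2 * μ i)) - (2 - γ) / 2) :
    (∀ x : I → ℝ, x ≠ 0 →
        0 < x ⬝ᵥ (((diagonal μ * ((1 + η) • (1 : Matrix I I ℝ) - γ • P)) +
          (diagonal μ * ((1 + η) • (1 : Matrix I I ℝ) - γ • P))ᵀ) *ᵥ x)) ∧
    (∀ x : I → ℝ, x ≠ 0 →
        0 < x ⬝ᵥ ((diagonal μ * ((1 + η) • (1 : Matrix I I ℝ) - γ • P)) *ᵥ x)) := by
  obtain ⟨hγ0, hγ1⟩ := hγ
  set M : Matrix I I ℝ := diagonal μ * ((1 + η) • (1 : Matrix I I ℝ) - γ • P) with hMdef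
  set c : I → ℝ := fun i => ∑ j, μ j * P j i with hcdef
  have hκ : ∀ i, 0 < (1 + η - γ/2) * μ i - (γ/2) * c i := by
    intro i
    have hsup : γ * (∑ j, μ j * P j i) / (2 * μ i) ≤ Finset.univ.sup' Finset.univ_nonempty
        (fun i => γ * (∑ j, μ j * P j i) / (2 * μ i)) :=
      Finset.le_sup' (fun i => γ * (∑ j, μ j * P j i) / (2 * μ i)) (Finset.mem_univ i)
    have hci : c i = ∑ j, μ j * P j i := rfl
    have h2 : γ * c i / (2 * μ i) - (2 - γ) / 2 < η := by
      rw [hci]; exact lt_of_le_of_lt (by linarith) hη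
    have hμi : 0 < 2 * μ i := by linarith [hμ i]
    have h3 : γ * c i < (η + (2 - γ) / 2) * (2 * μ i) := by
      rw [← div_lt_iff₀ hμi]; linarith
    nlinarith
  have hMapp : ∀ i j, M i j = μ i * ((1 + η) * (if i = j then 1 else 0) - γ * P i j) := by
    intro i j
    simp [hMdef, Matrix.diagonal_mul, Matrix.sub_apply, Matrix.smul_apply, Matrix.one_apply]
  have key : ∀ x : I → ℝ, x ≠ 0 → 0 < x ⬝ᵥ (M *ᵥ x) := by
    intro x hx
    have hexp : x ⬝ᵥ (M *ᵥ x) = (∑ i, (1 + η) * μ i * x i ^ 2)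
        - ∑ i, ∑ j, γ * (μ i * P i j) * (x i * x j) := by
      rw [dotProduct, ← Finset.sum_sub_distrib]
      refine Finset.sum_congr rfl fun i _ => ?_
      show x i * (M *ᵥ x) i = _
      rw [show (M *ᵥ x) i = ∑ j, M i j * x j from rfl, Finset.mul_sum]
      calc ∑ j, x i * (M i j * x j)
          = ∑ j, ((if i = j then (1 + η) * μ i * x i ^ 2 else 0)
              - γ * (μ i * P i j) * (x i * x j)) := by
            refine Finset.sum_congr rfl fun j _ => ?_
            rw [hMapp]
            by_cases h : i = j <;> simp [h] <;> ring
        _ = (1 + η) * μ i * x i ^ 2 - ∑ j, γ * (μ i * P i j) * (x i * x j) := by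
            rw [Finset.sum_sub_distrib, Finset.sum_ite_eq]; simp
    have hbound : ∑ i, ∑ j, γ * (μ i * P i j) * (x i * x j)
        ≤ ∑ i, ∑ j, (γ/2) * (μ i * P i j) * (x i ^ 2 + x j ^ 2) := by
      refine Finset.sum_le_sum fun i _ => Finset.sum_le_sum fun j _ => ?_
      have h1 : 0 ≤ μ i * P i j := mul_nonneg (hμ i).le (hP0 i j)
      nlinarith [sq_nonneg (x i - x j), mul_nonneg hγ0.le h1]
    have hsplit : ∑ i, ∑ j, (γ/2) * (μ i * P i j) * (x i ^ 2 + x j ^ 2)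
        = (∑ i, (γ/2) * μ i * x i ^ 2) + ∑ i, (γ/2) * c i * x i ^ 2 := by
      have e1 : ∀ i, ∑ j, (γ/2) * (μ i * P i j) * (x i ^ 2 + x j ^ 2)
          = (γ/2) * μ i * x i ^ 2 + ∑ j, (γ/2) * (μ i * P i j) * x j ^ 2 := by
        intro i
        rw [show ∑ j, (γ/2) * (μ i * P i j) * (x i ^ 2 + x j ^ 2)
            = ∑ j, ((γ/2) * μ i * x i ^ 2 * P i j + (γ/2) * (μ i * P i j) * x j ^ 2) from
          Finset.sum_congr rfl fun j _ => by ring]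
        rw [Finset.sum_add_distrib, ← Finset.mul_sum, hP1 i, mul_one]
      simp_rw [e1]
      rw [Finset.sum_add_distrib]
      congr 1
      rw [Finset.sum_comm]
      refine Finset.sum_congr rfl fun i _ => ?_
      have hci : c i = ∑ j, μ j * P j i := rfl
      rw [hci, Finset.mul_sum, Finset.sum_mul]
    have hpos : 0 < ∑ i, ((1 + η - γ/2) * μ i - (γ/2) * c i) * x i ^ 2 := by
      obtain ⟨i0, hi0⟩ := Function.ne_iff.mp hx
      refine Finset.sum_pos' (fun i _ => mul_nonneg (hκ i).le (sq_nonneg _)) ⟨i0,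
        Finset.mem_univ i0, mul_pos (hκ i0)
          (lt_of_le_of_ne (sq_nonneg _) (Ne.symm (pow_ne_zero 2 hi0)))⟩
    have heq : ∑ i, ((1 + η - γ/2) * μ i - (γ/2) * c i) * x i ^ 2
        = (∑ i, (1 + η) * μ i * x i ^ 2)
          - ((∑ i, (γ/2) * μ i * x i ^ 2) + ∑ i, (γ/2) * c i * x i ^ 2) := by
      rw [← Finset.sum_add_distrib, ← Finset.sum_sub_distrib]
      exact Finset.sum_congr rfl fun i _ => by ring
    rw [hexp]
    linarith [hbound, hsplit, heq, hpos]
  refine ⟨fun x hx => ?_, key⟩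
  have h1 : x ⬝ᵥ (Mᵀ *ᵥ x) = x ⬝ᵥ (M *ᵥ x) := by
    rw [Matrix.dotProduct_mulVec, Matrix.vecMul_transpose, dotProduct_comm]
  have := key x hx
  rw [Matrix.add_mulVec, dotProduct_add, h1]
  linarith
end

section
/- Let I be a nonempty finite index set, μ : I → ℝ with μ_i > 0 for all i, D = diag(μ), and let P be an I×I real matrix with nonnegative entries whose rows each sum to 1. Let γ ∈ [0,1] and η ∈ ℝ, and define M = D((1+η)I − γP). Then every eigenvalue λ of the symmetric matrix M + Mᵀ satisfies λ ≥ min_{i∈I} [ 2η μ_i + (2−γ) μ_i − γ Σ_j μ_j P_{j i} ]. -/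
open Matrix

/-- Let `μ : I → ℝ` be positive, `D = diag(μ)`, `P` row-stochastic, `γ ∈ [0,1]`, `η ∈ ℝ`,
and `M = D((1+η)I − γP)`.  Then every (real) eigenvalue `λ` of the symmetric matrix
`M + Mᵀ` satisfies `λ ≥ min_i [2η μ_i + (2−γ) μ_i − γ Σ_j μ_j P_{j i}]`. -/
theorem stmt_3 {I : Type*} [Fintype I] [Nonempty I] [DecidableEq I]
    (μ : I → ℝ) (hμ : ∀ i, 0 < μ i)
    (P : Matrix I I ℝ) (hP0 : ∀ i j, 0 ≤ P i j) (hP1 : ∀ i, ∑ j, P i j = 1)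
    (γ η : ℝ) (hγ : γ ∈ Set.Icc (0 : ℝ) 1)
    (M : Matrix I I ℝ) (hM : M = diagonal μ * ((1 + η) • (1 : Matrix I I ℝ) - γ • P)) :
    ∀ lam : ℝ, Module.End.HasEigenvalue (Matrix.toLin' (M + Mᵀ)) lam →
      (Finset.univ.inf' Finset.univ_nonempty fun i =>
        2 * η * μ i + (2 - γ) * μ i - γ * ∑ j, μ j * P j i) ≤ lam := by
  intro lam hl
  obtain ⟨k, hk⟩ := eigenvalue_mem_ball hl
  have hB : ∀ i j, (M + Mᵀ) i j =
      μ i * ((1 + η) * (if i = j then 1 else 0) - γ * P i j) +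
      μ j * ((1 + η) * (if j = i then 1 else 0) - γ * P j i) := by
    intro i j
    subst hM
    simp [Matrix.add_apply, Matrix.transpose_apply, Matrix.diagonal_mul, Matrix.sub_apply,
      Matrix.smul_apply, Matrix.one_apply, eq_comm, mul_comm]
  have hdiag : (M + Mᵀ) k k = 2 * (μ k * ((1 + η) - γ * P k k)) := by
    rw [hB k k]; simp; ring
  have hoff : ∀ j ∈ Finset.univ.erase k, ‖(M + Mᵀ) k j‖ =
      γ * μ k * P k j + γ * (μ j * P j k) := by
    intro j hj
    have hjk : j ≠ k := Finset.ne_of_mem_erase hj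
    rw [hB k j, if_neg (Ne.symm hjk), if_neg hjk, Real.norm_eq_abs]
    have h1 : μ k * ((1 + η) * 0 - γ * P k j) + μ j * ((1 + η) * 0 - γ * P j k)
        = -(γ * μ k * P k j + γ * (μ j * P j k)) := by ring
    rw [h1, abs_neg, abs_of_nonneg]
    have := hγ.1
    have := (hμ k).le
    have := (hμ j).le
    have := hP0 k j
    have := hP0 j k
    positivity
  have hrad : ∑ j ∈ Finset.univ.erase k, ‖(M + Mᵀ) k j‖
      = γ * μ k * (1 - P k k) + γ * ((∑ j, μ j * P j k) - μ k * P k k) := by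
    rw [Finset.sum_congr rfl hoff, Finset.sum_add_distrib, ← Finset.mul_sum, ← Finset.mul_sum,
      Finset.sum_erase_eq_sub (Finset.mem_univ k), Finset.sum_erase_eq_sub (Finset.mem_univ k),
      hP1 k]
  have hdist : |lam - (M + Mᵀ) k k| ≤ ∑ j ∈ Finset.univ.erase k, ‖(M + Mᵀ) k j‖ := by
    rw [Metric.mem_closedBall, Real.dist_eq] at hk
    exact hk
  rw [hdiag, hrad] at hdist
  have hlam := (abs_le.mp hdist).1
  refine le_trans (Finset.inf'_le _ (Finset.mem_univ k)) ?_
  show 2 * η * μ k + (2 - γ) * μ k - γ * ∑ j, μ j * P j k ≤ lam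
  linarith
end

section
/- Let S and A be nonempty finite sets, μ : S×A → ℝ positive, D = diag(μ), P a row-stochastic (S×A)×S real matrix, γ ∈ (0,1), and X a real (S×A)×n matrix with full column rank. For a deterministic policy π : S → A let Π_π be the S×(S×A) matrix with (Π_π)(s,(s′,a′)) = 1 if s′ = s and a′ = π(s), and 0 otherwise. Suppose η > max_{π, (s,a)} [ γ (μᵀ P Π_π)(s,a) / (2 μ(s,a)) ] − (2−γ)/2, where the max is over all deterministic policies π and all (s,a) ∈ S×A. Then for every deterministic policy π the n×n matrix A_π = −(1+η) XᵀDX + γ XᵀD P Π_π X is negative definite: θᵀA_πθ < 0 for all nonzero θ ∈ ℝⁿ. -/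
open Matrix

/-- With `D = diag(μ)` for a positive weight `μ` on state–action pairs, `P` a row-stochastic
transition matrix, `X` a feature matrix with full column rank, and action-selection
matrices `Π_π` for deterministic policies `π`, if
`η > max_{π,(s,a)} [γ (μᵀPΠ_π)(s,a) / (2μ(s,a))] − (2−γ)/2` then for every deterministic
policy `π` the matrix `A_π = −(1+η)XᵀDX + γXᵀDPΠ_πX` is negative definite. -/
theorem stmt_4 {S A : Type*} [Fintype S] [Fintype A] [Nonempty S] [Nonempty A]
    [DecidableEq S] [DecidableEq A] {n : ℕ}
    (μ : S × A → ℝ) (hμ : ∀ p, 0 < μ p)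
    (P : Matrix (S × A) S ℝ) (hP0 : ∀ p s, 0 ≤ P p s) (hP1 : ∀ p, ∑ s, P p s = 1)
    (γ : ℝ) (hγ : γ ∈ Set.Ioo (0 : ℝ) 1)
    (X : Matrix (S × A) (Fin n) ℝ) (hX : Function.Injective X.mulVec)
    (Pi : (S → A) → Matrix S (S × A) ℝ)
    (hPi : ∀ (π : S → A) (s : S) (p : S × A),
      Pi π s p = if p.1 = s ∧ p.2 = π s then 1 else 0)
    (η : ℝ)
    (hη : η > (Finset.univ.sup' Finset.univ_nonempty
        fun q : (S → A) × (S × A) =>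
          γ * (μ ᵥ* (P * Pi q.1)) q.2 / (2 * μ q.2)) - (2 - γ) / 2) :
    ∀ (π : S → A) (θ : Fin n → ℝ), θ ≠ 0 →
      θ ⬝ᵥ ((-(1 + η) • (Xᵀ * diagonal μ * X) +
        γ • (Xᵀ * diagonal μ * P * Pi π * X)) *ᵥ θ) < 0 := by
  intro π θ hθ
  obtain ⟨hγ0, hγ1⟩ := hγ
  set x : S × A → ℝ := X *ᵥ θ with hxdef
  have hxne : x ≠ 0 := by
    intro h
    exact hθ (hX (by simpa [Matrix.mulVec_zero] using h))
  set Q : Matrix (S × A) (S × A) ℝ := P * Pi π with hQdef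
  have hQ0 : ∀ p q, 0 ≤ Q p q := by
    intro p q
    rw [hQdef, Matrix.mul_apply]
    refine Finset.sum_nonneg fun s _ => ?_
    rw [hPi]
    split
    · simpa using hP0 p s
    · simp
  have hQrow : ∀ p, ∑ q, Q p q = 1 := by
    intro p
    have hrow : ∀ s : S, ∑ q : S × A, Pi π s q = 1 := by
      intro s
      have : ∀ q : S × A, Pi π s q = if q = (s, π s) then (1 : ℝ) else 0 := by
        intro q
        rw [hPi]
        congr 1
        simp [Prod.ext_iff]
      simp [this]
    calc ∑ q, Q p q = ∑ q : S × A, ∑ s : S, P p s * Pi π s q := by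
          simp [hQdef, Matrix.mul_apply]
      _ = ∑ s : S, ∑ q : S × A, P p s * Pi π s q := Finset.sum_comm
      _ = ∑ s : S, P p s * ∑ q : S × A, Pi π s q := by
          simp [Finset.mul_sum]
      _ = 1 := by simp [hrow, hP1 p]
  set y : S × A → ℝ := Q *ᵥ x with hydef
  set ν : S × A → ℝ := μ ᵥ* Q with hνdef
  -- the key coefficient bound
  have hcoef : ∀ q : S × A, (-(1 + η) + γ / 2) * μ q + (γ / 2) * ν q < 0 := by
    intro q
    have hle : γ * (μ ᵥ* (P * Pi π)) q / (2 * μ q) ≤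
        Finset.univ.sup' Finset.univ_nonempty
          (fun q : (S → A) × (S × A) => γ * (μ ᵥ* (P * Pi q.1)) q.2 / (2 * μ q.2)) :=
      Finset.le_sup' (f := fun q : (S → A) × (S × A) =>
        γ * (μ ᵥ* (P * Pi q.1)) q.2 / (2 * μ q.2)) (Finset.mem_univ (π, q))
    have hq : γ * ν q / (2 * μ q) - (2 - γ) / 2 < η := by
      have : γ * ν q / (2 * μ q) = γ * (μ ᵥ* (P * Pi π)) q / (2 * μ q) := by
        rw [hνdef, hQdef]
      rw [this]
      exact lt_of_le_of_lt (by linarith) hη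
    have hμq := hμ q
    have h2 : γ * ν q < (η + (2 - γ) / 2) * (2 * μ q) := by
      rw [← div_lt_iff₀ (by positivity)]
      linarith
    nlinarith
  -- rewrite the quadratic form
  have hform : θ ⬝ᵥ ((-(1 + η) • (Xᵀ * diagonal μ * X) +
        γ • (Xᵀ * diagonal μ * P * Pi π * X)) *ᵥ θ)
      = ∑ p, (-(1 + η) * (μ p * x p ^ 2) + γ * (μ p * (x p * y p))) := by
    have e1 : (Xᵀ * diagonal μ * X) *ᵥ θ = Xᵀ *ᵥ (diagonal μ *ᵥ x) := by
      rw [hxdef, Matrix.mulVec_mulVec, Matrix.mulVec_mulVec]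
    have e2 : (Xᵀ * diagonal μ * P * Pi π * X) *ᵥ θ
        = Xᵀ *ᵥ (diagonal μ *ᵥ (Q *ᵥ x)) := by
      have hm : Xᵀ * diagonal μ * P * Pi π * X = Xᵀ * (diagonal μ * (Q * X)) := by
        rw [hQdef]; simp only [Matrix.mul_assoc]
      rw [hm, hxdef]
      simp only [← Matrix.mulVec_mulVec]
    rw [Matrix.add_mulVec, Matrix.smul_mulVec, Matrix.smul_mulVec,
      dotProduct_add, dotProduct_smul, dotProduct_smul, e1, e2]
    have key : ∀ v : (S × A) → ℝ, θ ⬝ᵥ (Xᵀ *ᵥ (diagonal μ *ᵥ v))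
        = ∑ p, μ p * (x p * v p) := by
      intro v
      rw [Matrix.dotProduct_mulVec, Matrix.vecMul_transpose, ← hxdef]
      simp [dotProduct, Matrix.mulVec_diagonal, mul_comm, mul_assoc, mul_left_comm]
    rw [key, key, ← hydef, smul_eq_mul, smul_eq_mul, Finset.mul_sum, Finset.mul_sum,
      ← Finset.sum_add_distrib]
    refine Finset.sum_congr rfl fun p _ => ?_
    ring
  rw [hform]
  -- pointwise bound followed by the Jensen-type bound
  have step1 : ∑ p, (-(1 + η) * (μ p * x p ^ 2) + γ * (μ p * (x p * y p)))
      ≤ ∑ p, ((-(1 + η) + γ / 2) * (μ p * x p ^ 2) + (γ / 2) * (μ p * y p ^ 2)) := by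
    refine Finset.sum_le_sum fun p _ => ?_
    have hμp := (hμ p).le
    nlinarith [mul_nonneg (mul_nonneg hγ0.le hμp) (sq_nonneg (x p - y p))]
  have step2 : ∑ p, (γ / 2) * (μ p * y p ^ 2) ≤ ∑ q, (γ / 2) * (ν q * x q ^ 2) := by
    have hy2 : ∀ p, y p ^ 2 ≤ ∑ q, Q p q * x q ^ 2 := by
      intro p
      have := Finset.sum_sq_le_sum_mul_sum_of_sq_eq_mul Finset.univ
        (f := fun q => Q p q) (g := fun q => Q p q * x q ^ 2)
        (r := fun q => Q p q * x q)
        (fun q _ => hQ0 p q) (fun q _ => mul_nonneg (hQ0 p q) (sq_nonneg _))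
        (fun q _ => by ring)
      calc y p ^ 2 = (∑ q, Q p q * x q) ^ 2 := by
            simp [hydef, Matrix.mulVec, dotProduct]
        _ ≤ (∑ q, Q p q) * ∑ q, Q p q * x q ^ 2 := this
        _ = ∑ q, Q p q * x q ^ 2 := by rw [hQrow p, one_mul]
    calc ∑ p, (γ / 2) * (μ p * y p ^ 2)
        ≤ ∑ p, (γ / 2) * (μ p * ∑ q, Q p q * x q ^ 2) := by
          refine Finset.sum_le_sum fun p _ => ?_
          have hμp := (hμ p).le
          have h1 := mul_le_mul_of_nonneg_left (hy2 p) hμp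
          have h2 := mul_le_mul_of_nonneg_left h1 (by positivity : (0:ℝ) ≤ γ / 2)
          linarith
      _ = ∑ q, (γ / 2) * (ν q * x q ^ 2) := by
          simp only [Finset.mul_sum, hνdef, Matrix.vecMul, dotProduct, Finset.sum_mul]
          rw [Finset.sum_comm]
          refine Finset.sum_congr rfl fun q _ => Finset.sum_congr rfl fun p _ => ?_
          ring
  have step3 : ∑ q, ((-(1 + η) + γ / 2) * (μ q * x q ^ 2) + (γ / 2) * (ν q * x q ^ 2)) < 0 := by
    obtain ⟨q0, hq0⟩ := Function.ne_iff.mp hxne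
    have hterm : ∀ q : S × A, ((-(1 + η) + γ / 2) * (μ q * x q ^ 2) + (γ / 2) * (ν q * x q ^ 2))
        = ((-(1 + η) + γ / 2) * μ q + (γ / 2) * ν q) * x q ^ 2 := fun q => by ring
    have hle : ∀ q ∈ Finset.univ, ((-(1 + η) + γ / 2) * (μ q * x q ^ 2)
        + (γ / 2) * (ν q * x q ^ 2)) ≤ (0 : ℝ) := by
      intro q _
      rw [hterm q]
      exact mul_nonpos_of_nonpos_of_nonneg (hcoef q).le (sq_nonneg _)
    have hlt : ((-(1 + η) + γ / 2) * (μ q0 * x q0 ^ 2)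
        + (γ / 2) * (ν q0 * x q0 ^ 2)) < 0 := by
      rw [hterm q0]
      have hx2 : 0 < x q0 ^ 2 := by
        have : x q0 ≠ 0 := by simpa using hq0
        positivity
      exact mul_neg_of_neg_of_pos (hcoef q0) hx2
    calc ∑ q, ((-(1 + η) + γ / 2) * (μ q * x q ^ 2) + (γ / 2) * (ν q * x q ^ 2))
        < ∑ _q : S × A, (0 : ℝ) :=
          Finset.sum_lt_sum hle ⟨q0, Finset.mem_univ q0, hlt⟩
      _ = 0 := by simp
  calc ∑ p, (-(1 + η) * (μ p * x p ^ 2) + γ * (μ p * (x p * y p)))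
      ≤ ∑ p, ((-(1 + η) + γ / 2) * (μ p * x p ^ 2) + (γ / 2) * (μ p * y p ^ 2)) := step1
    _ ≤ ∑ q, ((-(1 + η) + γ / 2) * (μ q * x q ^ 2) + (γ / 2) * (ν q * x q ^ 2)) := by
        rw [Finset.sum_add_distrib, Finset.sum_add_distrib]
        exact add_le_add_right step2 _
    _ < 0 := step3
end

section
/- Let S and A be nonempty finite sets, μ : S×A → ℝ with 0 < μ(s,a) ≤ 1 for all (s,a), D = diag(μ), P a row-stochastic (S×A)×S real matrix, R : S×A → ℝ, γ ∈ (0,1), and X a real (S×A)×n matrix such that XᵀDX is invertible. Define B : ℝ^{S×A} → ℝ^{S} by (Bq)(s) = max_{a∈A} q(s,a), and define T_η(θ) = (1/(1+η)) (XᵀDX)^{-1} ( XᵀDR + γ XᵀD P B(Xθ) ). If ‖(XᵀDX)^{-1}‖_∞ · ‖Xᵀ‖_∞ · ‖X‖_∞ ≤ 1 + η, then T_η is a γ-contraction in the supremum norm: ‖T_η(θ₁) − T_η(θ₂)‖_∞ ≤ γ ‖θ₁ − θ₂‖_∞ for all θ₁, θ₂ ∈ ℝⁿ. -/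
open Matrix

attribute [local instance] Matrix.linftyOpNormedAddCommGroup

/-- The greedy-max operator `(Bq)(s) = max_{a ∈ A} q(s,a)`. -/
noncomputable def greedyMax {S A : Type*} [Fintype A] [Nonempty A]
    (q : S × A → ℝ) : S → ℝ :=
  fun s => Finset.univ.sup' Finset.univ_nonempty fun a => q (s, a)

/-- The regularized projected Bellman operator
`T_η(θ) = (1/(1+η)) (XᵀDX)⁻¹ (XᵀDR + γ XᵀD P B(Xθ))`. -/
noncomputable def Treg {S A : Type*} [Fintype S] [Fintype A] [Nonempty A]
    [DecidableEq S] [DecidableEq A] {n : ℕ}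
    (μ : S × A → ℝ) (P : Matrix (S × A) S ℝ) (R : S × A → ℝ) (γ η : ℝ)
    (X : Matrix (S × A) (Fin n) ℝ) (θ : Fin n → ℝ) : Fin n → ℝ :=
  (1 / (1 + η)) •
    ((Xᵀ * diagonal μ * X)⁻¹ *ᵥ
      ((Xᵀ * diagonal μ) *ᵥ R + γ • ((Xᵀ * diagonal μ * P) *ᵥ greedyMax (X *ᵥ θ))))

lemma greedyMax_lipschitz {S A : Type*} [Fintype S] [Fintype A] [Nonempty S] [Nonempty A]
    (q₁ q₂ : S × A → ℝ) : ‖greedyMax q₁ - greedyMax q₂‖ ≤ ‖q₁ - q₂‖ := by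
  rw [pi_norm_le_iff_of_nonneg (norm_nonneg _)]
  intro s
  rw [Pi.sub_apply, Real.norm_eq_abs, abs_sub_le_iff]
  constructor
  · apply sub_le_iff_le_add.2
    apply Finset.sup'_le
    intro a _
    have h1 : q₁ (s, a) ≤ q₂ (s, a) + ‖q₁ - q₂‖ := by
      have := norm_le_pi_norm (q₁ - q₂) (s, a)
      rw [Pi.sub_apply, Real.norm_eq_abs] at this
      linarith [abs_le.1 this]
    have h2 : q₂ (s, a) ≤ greedyMax q₂ s :=
      Finset.le_sup' (fun a => q₂ (s, a)) (Finset.mem_univ a)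
    linarith
  · apply sub_le_iff_le_add.2
    apply Finset.sup'_le
    intro a _
    have h1 : q₂ (s, a) ≤ q₁ (s, a) + ‖q₁ - q₂‖ := by
      have := norm_le_pi_norm (q₁ - q₂) (s, a)
      rw [Pi.sub_apply, Real.norm_eq_abs] at this
      linarith [abs_le.1 this]
    have h2 : q₁ (s, a) ≤ greedyMax q₁ s :=
      Finset.le_sup' (fun a => q₁ (s, a)) (Finset.mem_univ a)
    linarith

lemma stoch_mulVec_le {S A : Type*} [Fintype S] [Fintype A] [Nonempty A]
    (P : Matrix (S × A) S ℝ) (hP0 : ∀ p s, 0 ≤ P p s) (hP1 : ∀ p, ∑ s, P p s = 1)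
    (v : S → ℝ) : ‖P *ᵥ v‖ ≤ ‖v‖ := by
  rw [pi_norm_le_iff_of_nonneg (norm_nonneg _)]
  intro p
  rw [Real.norm_eq_abs, mulVec, dotProduct]
  calc |∑ s, P p s * v s| ≤ ∑ s, |P p s * v s| := Finset.abs_sum_le_sum_abs _ _
    _ ≤ ∑ s, P p s * ‖v‖ := by
        apply Finset.sum_le_sum
        intro s _
        rw [abs_mul, abs_of_nonneg (hP0 p s)]
        exact mul_le_mul_of_nonneg_left ((Real.norm_eq_abs _ ▸ norm_le_pi_norm v s)) (hP0 p s)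
    _ = ‖v‖ := by rw [← Finset.sum_mul, hP1 p, one_mul]

lemma diag_mulVec_le {S A : Type*} [Fintype S] [Fintype A] [DecidableEq S] [DecidableEq A]
    (μ : S × A → ℝ) (hμ : ∀ p, 0 < μ p ∧ μ p ≤ 1)
    (w : S × A → ℝ) : ‖diagonal μ *ᵥ w‖ ≤ ‖w‖ := by
  rw [pi_norm_le_iff_of_nonneg (norm_nonneg _)]
  intro p
  rw [mulVec_diagonal, Real.norm_eq_abs, abs_mul]
  calc |μ p| * |w p| ≤ 1 * ‖w‖ := by
        apply mul_le_mul
        · rw [abs_of_pos (hμ p).1]; exact (hμ p).2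
        · exact Real.norm_eq_abs _ ▸ norm_le_pi_norm w p
        · exact abs_nonneg _
        · exact zero_le_one
    _ = ‖w‖ := one_mul _

/-- If `‖(XᵀDX)⁻¹‖_∞ ‖Xᵀ‖_∞ ‖X‖_∞ ≤ 1 + η`, the regularized projected Bellman operator
`T_η` is a `γ`-contraction in the supremum norm. -/
theorem stmt_5 {S A : Type*} [Fintype S] [Fintype A] [Nonempty S] [Nonempty A]
    [DecidableEq S] [DecidableEq A] {n : ℕ}
    (μ : S × A → ℝ) (hμ : ∀ p, 0 < μ p ∧ μ p ≤ 1)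
    (P : Matrix (S × A) S ℝ) (hP0 : ∀ p s, 0 ≤ P p s) (hP1 : ∀ p, ∑ s, P p s = 1)
    (R : S × A → ℝ) (γ : ℝ) (hγ : γ ∈ Set.Ioo (0 : ℝ) 1)
    (X : Matrix (S × A) (Fin n) ℝ) (hX : IsUnit (Xᵀ * diagonal μ * X).det)
    (η : ℝ) (hη : 0 ≤ η)
    (hnorm : ‖(Xᵀ * diagonal μ * X)⁻¹‖ * ‖Xᵀ‖ * ‖X‖ ≤ 1 + η) :
    ∀ θ₁ θ₂ : Fin n → ℝ,
      ‖Treg μ P R γ η X θ₁ - Treg μ P R γ η X θ₂‖ ≤ γ * ‖θ₁ - θ₂‖ := by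
  intro θ₁ θ₂
  set Inv := (Xᵀ * diagonal μ * X)⁻¹
  set g₁ := greedyMax (X *ᵥ θ₁)
  set g₂ := greedyMax (X *ᵥ θ₂)
  have hdiff : Treg μ P R γ η X θ₁ - Treg μ P R γ η X θ₂
      = (1 / (1 + η)) • (γ • (Inv *ᵥ ((Xᵀ * diagonal μ * P) *ᵥ (g₁ - g₂)))) := by
    unfold Treg
    rw [← smul_sub]
    congr 1
    rw [← mulVec_sub]
    have h : (Xᵀ * diagonal μ) *ᵥ R + γ • ((Xᵀ * diagonal μ * P) *ᵥ greedyMax (X *ᵥ θ₁))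
        - ((Xᵀ * diagonal μ) *ᵥ R + γ • ((Xᵀ * diagonal μ * P) *ᵥ greedyMax (X *ᵥ θ₂)))
        = γ • ((Xᵀ * diagonal μ * P) *ᵥ (g₁ - g₂)) := by
      rw [mulVec_sub]; module
    rw [h, mulVec_smul]
  have h1η : (0:ℝ) < 1 + η := by linarith
  rw [hdiff, norm_smul, norm_smul, Real.norm_eq_abs, Real.norm_eq_abs,
    abs_of_pos hγ.1, abs_of_pos (by positivity : (0:ℝ) < 1 / (1 + η))]
  have key : ‖Inv *ᵥ ((Xᵀ * diagonal μ * P) *ᵥ (g₁ - g₂))‖ ≤ (1 + η) * ‖θ₁ - θ₂‖ := by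
    have hg : ‖g₁ - g₂‖ ≤ ‖X‖ * ‖θ₁ - θ₂‖ := by
      calc ‖g₁ - g₂‖ ≤ ‖X *ᵥ θ₁ - X *ᵥ θ₂‖ := greedyMax_lipschitz _ _
        _ = ‖X *ᵥ (θ₁ - θ₂)‖ := by rw [mulVec_sub]
        _ ≤ ‖X‖ * ‖θ₁ - θ₂‖ := linfty_opNorm_mulVec _ _
    have hmid : ‖(Xᵀ * diagonal μ * P) *ᵥ (g₁ - g₂)‖ ≤ ‖Xᵀ‖ * ‖g₁ - g₂‖ := by
      have : (Xᵀ * diagonal μ * P) *ᵥ (g₁ - g₂)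
          = Xᵀ *ᵥ (diagonal μ *ᵥ (P *ᵥ (g₁ - g₂))) := by
        rw [mulVec_mulVec, mulVec_mulVec]
      rw [this]
      calc ‖Xᵀ *ᵥ (diagonal μ *ᵥ (P *ᵥ (g₁ - g₂)))‖
          ≤ ‖Xᵀ‖ * ‖diagonal μ *ᵥ (P *ᵥ (g₁ - g₂))‖ := linfty_opNorm_mulVec _ _
        _ ≤ ‖Xᵀ‖ * ‖P *ᵥ (g₁ - g₂)‖ := by
            exact mul_le_mul_of_nonneg_left (diag_mulVec_le μ hμ _) (norm_nonneg _)
        _ ≤ ‖Xᵀ‖ * ‖g₁ - g₂‖ := by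
            exact mul_le_mul_of_nonneg_left (stoch_mulVec_le P hP0 hP1 _) (norm_nonneg _)
    calc ‖Inv *ᵥ ((Xᵀ * diagonal μ * P) *ᵥ (g₁ - g₂))‖
        ≤ ‖Inv‖ * ‖(Xᵀ * diagonal μ * P) *ᵥ (g₁ - g₂)‖ := linfty_opNorm_mulVec _ _
      _ ≤ ‖Inv‖ * (‖Xᵀ‖ * ‖g₁ - g₂‖) :=
          mul_le_mul_of_nonneg_left hmid (norm_nonneg _)
      _ ≤ ‖Inv‖ * (‖Xᵀ‖ * (‖X‖ * ‖θ₁ - θ₂‖)) := by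
          exact mul_le_mul_of_nonneg_left
            (mul_le_mul_of_nonneg_left hg (norm_nonneg _)) (norm_nonneg _)
      _ = ‖Inv‖ * ‖Xᵀ‖ * ‖X‖ * ‖θ₁ - θ₂‖ := by ring
      _ ≤ (1 + η) * ‖θ₁ - θ₂‖ := mul_le_mul_of_nonneg_right hnorm (norm_nonneg _)
  calc 1 / (1 + η) * (γ * ‖Inv *ᵥ ((Xᵀ * diagonal μ * P) *ᵥ (g₁ - g₂))‖)
      ≤ 1 / (1 + η) * (γ * ((1 + η) * ‖θ₁ - θ₂‖)) := by
        apply mul_le_mul_of_nonneg_left (mul_le_mul_of_nonneg_left key hγ.1.le)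
        positivity
    _ = γ * ‖θ₁ - θ₂‖ := by field_simp
end

section
/- Let S and A be nonempty finite sets, μ : S×A → ℝ with 0 < μ(s,a) ≤ 1 for all (s,a), D = diag(μ), P a row-stochastic (S×A)×S real matrix, R : S×A → ℝ, γ ∈ (0,1), and X a real (S×A)×n matrix such that XᵀDX is invertible. Define B : ℝ^{S×A} → ℝ^{S} by (Bq)(s) = max_{a∈A} q(s,a) and T_η(θ) = (1/(1+η)) (XᵀDX)^{-1} ( XᵀDR + γ XᵀD P B(Xθ) ). If ‖(XᵀDX)^{-1}‖_∞ · ‖Xᵀ‖_∞ · ‖X‖_∞ ≤ 1 + η, then there exists a unique θ_e ∈ ℝⁿ with T_η(θ_e) = θ_e, i.e. the regularized projected Bellman equation (1+η) XᵀDX θ_e = XᵀDR + γ XᵀD P B(Xθ_e) has a unique solution. -/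
open Matrix

attribute [local instance] Matrix.linftyOpNormedAddCommGroup

theorem greedy_lip' {S A : Type*} [Fintype S] [Fintype A] [Nonempty S] [Nonempty A]
    (q r : S × A → ℝ) :
    ‖(fun s => Finset.univ.sup' Finset.univ_nonempty fun a : A => q (s, a)) -
      (fun s => Finset.univ.sup' Finset.univ_nonempty fun a : A => r (s, a))‖ ≤ ‖q - r‖ := by
  rw [pi_norm_le_iff_of_nonneg (norm_nonneg _)]
  intro s
  have key : ∀ p : S × A, |q p - r p| ≤ ‖q - r‖ := by
    intro p
    simpa [Real.norm_eq_abs] using norm_le_pi_norm (q - r) p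
  rw [Pi.sub_apply, Real.norm_eq_abs, abs_sub_le_iff]
  constructor
  · rw [sub_le_iff_le_add]
    apply Finset.sup'_le
    intro a _
    have h1 : q (s,a) ≤ r (s,a) + ‖q - r‖ := by
      have := key (s,a); rw [abs_sub_le_iff] at this; linarith [this.1]
    have h2 : r (s,a) ≤ Finset.univ.sup' Finset.univ_nonempty fun a : A => r (s, a) :=
      Finset.le_sup' (fun a : A => r (s, a)) (Finset.mem_univ a)
    linarith
  · rw [sub_le_iff_le_add]
    apply Finset.sup'_le
    intro a _
    have h1 : r (s,a) ≤ q (s,a) + ‖q - r‖ := by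
      have := key (s,a); rw [abs_sub_le_iff] at this; linarith [this.2]
    have h2 : q (s,a) ≤ Finset.univ.sup' Finset.univ_nonempty fun a : A => q (s, a) :=
      Finset.le_sup' (fun a : A => q (s, a)) (Finset.mem_univ a)
    linarith

-- stochastic matrix contraction
theorem stoch_bound {S T : Type*} [Fintype S] [Fintype T]
    (P : Matrix T S ℝ) (hP0 : ∀ p s, 0 ≤ P p s) (hP1 : ∀ p, ∑ s, P p s = 1)
    (d : S → ℝ) : ‖P *ᵥ d‖ ≤ ‖d‖ := by
  rw [pi_norm_le_iff_of_nonneg (norm_nonneg _)]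
  intro p
  rw [Real.norm_eq_abs, mulVec, dotProduct]
  calc |∑ s, P p s * d s| ≤ ∑ s, |P p s * d s| := Finset.abs_sum_le_sum_abs _ _
    _ ≤ ∑ s, P p s * ‖d‖ := by
        apply Finset.sum_le_sum
        intro s _
        rw [abs_mul, abs_of_nonneg (hP0 p s)]
        exact mul_le_mul_of_nonneg_left (norm_le_pi_norm d s) (hP0 p s)
    _ = ‖d‖ := by rw [← Finset.sum_mul, hP1 p, one_mul]

-- diagonal with entries in [0,1] contracts
theorem diag_bound {S : Type*} [Fintype S] [DecidableEq S]
    (μ : S → ℝ) (hμ : ∀ p, 0 < μ p ∧ μ p ≤ 1) (v : S → ℝ) :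
    ‖diagonal μ *ᵥ v‖ ≤ ‖v‖ := by
  rw [pi_norm_le_iff_of_nonneg (norm_nonneg _)]
  intro p
  rw [mulVec_diagonal, Real.norm_eq_abs, abs_mul, abs_of_pos (hμ p).1]
  calc μ p * |v p| ≤ 1 * ‖v‖ := by
        apply mul_le_mul (hμ p).2 (norm_le_pi_norm v p) (abs_nonneg _) zero_le_one
    _ = ‖v‖ := one_mul _



/-- If `‖(XᵀDX)⁻¹‖_∞ ‖Xᵀ‖_∞ ‖X‖_∞ ≤ 1 + η`, then `T_η` has a unique fixed point `θ_e`,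
i.e. the regularized projected Bellman equation
`(1+η) XᵀDX θ_e = XᵀDR + γ XᵀD P B(Xθ_e)` has a unique solution. -/
theorem stmt_6 {S A : Type*} [Fintype S] [Fintype A] [Nonempty S] [Nonempty A]
    [DecidableEq S] [DecidableEq A] {n : ℕ}
    (μ : S × A → ℝ) (hμ : ∀ p, 0 < μ p ∧ μ p ≤ 1)
    (P : Matrix (S × A) S ℝ) (hP0 : ∀ p s, 0 ≤ P p s) (hP1 : ∀ p, ∑ s, P p s = 1)
    (R : S × A → ℝ) (γ : ℝ) (hγ : γ ∈ Set.Ioo (0 : ℝ) 1)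
    (X : Matrix (S × A) (Fin n) ℝ) (hX : IsUnit (Xᵀ * diagonal μ * X).det)
    (η : ℝ) (hη : 0 ≤ η)
    (hnorm : ‖(Xᵀ * diagonal μ * X)⁻¹‖ * ‖Xᵀ‖ * ‖X‖ ≤ 1 + η) :
    (∃! θe : Fin n → ℝ, Treg μ P R γ η X θe = θe) ∧
    (∃! θe : Fin n → ℝ,
      (1 + η) • ((Xᵀ * diagonal μ * X) *ᵥ θe) =
        (Xᵀ * diagonal μ) *ᵥ R +
          γ • ((Xᵀ * diagonal μ * P) *ᵥ greedyMax (X *ᵥ θe))) := by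
  set G := Xᵀ * diagonal μ * X with hG
  set M := Xᵀ * diagonal μ with hM
  have hηpos : (0:ℝ) < 1 + η := by linarith
  have hηne : (1:ℝ) + η ≠ 0 := ne_of_gt hηpos
  set f := Treg μ P R γ η X with hf
  -- f is a γ-contraction
  have hlip : ∀ θ1 θ2 : Fin n → ℝ, dist (f θ1) (f θ2) ≤ γ * dist θ1 θ2 := by
    intro θ1 θ2
    set g1 := greedyMax (X *ᵥ θ1) with hg1
    set g2 := greedyMax (X *ᵥ θ2) with hg2
    have heq : f θ1 - f θ2 = ((1/(1+η)) * γ) • (G⁻¹ *ᵥ ((M * P) *ᵥ (g1 - g2))) := by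
      simp only [hf, Treg, ← smul_sub, ← mulVec_sub, ← hG, ← hM, ← hg1, ← hg2]
      have h1 : (M *ᵥ R + γ • ((M * P) *ᵥ g1)) - (M *ᵥ R + γ • ((M * P) *ᵥ g2)) =
          γ • ((M * P) *ᵥ (g1 - g2)) := by
        rw [mulVec_sub, smul_sub]; abel
      rw [h1, mulVec_smul, smul_smul]
    have hd : ‖g1 - g2‖ ≤ ‖X‖ * ‖θ1 - θ2‖ := by
      calc ‖g1 - g2‖ ≤ ‖(X *ᵥ θ1) - (X *ᵥ θ2)‖ := greedy_lip' (X *ᵥ θ1) (X *ᵥ θ2)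
        _ = ‖X *ᵥ (θ1 - θ2)‖ := by rw [mulVec_sub]
        _ ≤ ‖X‖ * ‖θ1 - θ2‖ := linfty_opNorm_mulVec X _
    have hmp : ‖(M * P) *ᵥ (g1 - g2)‖ ≤ ‖Xᵀ‖ * (‖X‖ * ‖θ1 - θ2‖) := by
      rw [← mulVec_mulVec, hM, ← mulVec_mulVec]
      calc ‖Xᵀ *ᵥ (diagonal μ *ᵥ (P *ᵥ (g1 - g2)))‖
          ≤ ‖Xᵀ‖ * ‖diagonal μ *ᵥ (P *ᵥ (g1 - g2))‖ := linfty_opNorm_mulVec _ _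
        _ ≤ ‖Xᵀ‖ * ‖P *ᵥ (g1 - g2)‖ := by
            gcongr; exact diag_bound μ hμ _
        _ ≤ ‖Xᵀ‖ * ‖g1 - g2‖ := by
            gcongr; exact stoch_bound P hP0 hP1 _
        _ ≤ ‖Xᵀ‖ * (‖X‖ * ‖θ1 - θ2‖) := by gcongr
    have hc : (0:ℝ) < (1/(1+η)) * γ := mul_pos (one_div_pos.mpr hηpos) hγ.1
    rw [dist_eq_norm, dist_eq_norm, heq, norm_smul, Real.norm_eq_abs, abs_of_pos hc]
    calc (1/(1+η)) * γ * ‖G⁻¹ *ᵥ ((M * P) *ᵥ (g1 - g2))‖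
        ≤ (1/(1+η)) * γ * (‖G⁻¹‖ * (‖Xᵀ‖ * (‖X‖ * ‖θ1 - θ2‖))) := by
          apply mul_le_mul_of_nonneg_left _ hc.le
          calc ‖G⁻¹ *ᵥ ((M * P) *ᵥ (g1 - g2))‖ ≤ ‖G⁻¹‖ * ‖(M * P) *ᵥ (g1 - g2)‖ :=
                linfty_opNorm_mulVec _ _
            _ ≤ _ := by gcongr
      _ ≤ γ * ‖θ1 - θ2‖ := by
          have h1 : ‖G⁻¹‖ * ‖Xᵀ‖ * ‖X‖ ≤ 1 + η := hnorm
          have h2 : (0:ℝ) ≤ ‖θ1 - θ2‖ := norm_nonneg _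
          have h3 : (0:ℝ) < γ := hγ.1
          rw [div_mul_eq_mul_div, one_mul, div_mul_eq_mul_div, div_le_iff₀ hηpos]
          nlinarith [mul_le_mul_of_nonneg_left h1 (mul_nonneg h3.le h2),
            norm_nonneg (G⁻¹), norm_nonneg Xᵀ, norm_nonneg X]
  have hcontr : ContractingWith ⟨γ, hγ.1.le⟩ f :=
    ⟨by exact_mod_cast hγ.2, LipschitzWith.of_dist_le_mul hlip⟩
  have part1 : ∃! θe : Fin n → ℝ, f θe = θe :=
    ⟨hcontr.fixedPoint, hcontr.fixedPoint_isFixedPt,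
      fun y hy => hcontr.fixedPoint_unique hy⟩
  refine ⟨part1, ?_⟩
  have equiv : ∀ θ : Fin n → ℝ,
      ((1 + η) • (G *ᵥ θ) = M *ᵥ R + γ • ((M * P) *ᵥ greedyMax (X *ᵥ θ))) ↔ f θ = θ := by
    intro θ
    set v := M *ᵥ R + γ • ((M * P) *ᵥ greedyMax (X *ᵥ θ)) with hv
    have hfθ : f θ = (1/(1+η)) • (G⁻¹ *ᵥ v) := rfl
    constructor
    · intro h
      rw [hfθ, ← h, mulVec_smul, mulVec_mulVec, nonsing_inv_mul G hX, one_mulVec,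
        smul_smul, one_div, inv_mul_cancel₀ hηne, one_smul]
    · intro h
      have h2 : G⁻¹ *ᵥ v = (1 + η) • θ := by
        have := congrArg (fun w => (1 + η) • w) h
        simpa [hfθ, smul_smul, mul_one_div, div_self hηne, mul_inv_cancel₀ hηne] using this
      have h3 : G *ᵥ (G⁻¹ *ᵥ v) = v := by
        rw [mulVec_mulVec, mul_nonsing_inv G hX, one_mulVec]
      rw [← h3, h2, mulVec_smul]
  obtain ⟨θ, hθ, huniq⟩ := part1
  exact ⟨θ, (equiv θ).2 hθ, fun y hy => huniq y ((equiv y).1 hy)⟩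
end

section
/- Let n ≥ 1 and equip ℝⁿ with the supremum norm ‖·‖_∞. Let T : ℝⁿ → ℝⁿ be γ-Lipschitz with γ ∈ (0,1), let Q* ∈ ℝⁿ satisfy T(Q*) = Q* and ‖Q*‖_∞ ≤ R_max/(1−γ) for some R_max ≥ 0, let Γ : ℝⁿ → ℝⁿ be a linear map with operator norm ‖Γ‖_∞ (with respect to ‖·‖_∞), and let η ≥ 0 satisfy 1 + η > γ‖Γ‖_∞. If q_e ∈ ℝⁿ satisfies (1+η) q_e = Γ(T(q_e)), then ‖q_e − Q*‖_∞ ≤ ‖Q* − Γ(Q*)‖_∞ / (1 + η − γ‖Γ‖_∞) + (η / (1 + η − γ‖Γ‖_∞)) · R_max/(1−γ). -/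
/-- Error bound for the regularized projected fixed point.  With `ℝⁿ` carrying the
supremum norm: if `T` is a `γ`-contraction with fixed point `Q*` satisfying
`‖Q*‖_∞ ≤ R_max/(1−γ)`, `Γ` is a linear map with operator norm `‖Γ‖_∞`,
`1 + η > γ‖Γ‖_∞`, and `(1+η) q_e = Γ(T(q_e))`, then
`‖q_e − Q*‖_∞ ≤ ‖Q* − ΓQ*‖_∞/(1+η−γ‖Γ‖) + (η/(1+η−γ‖Γ‖)) R_max/(1−γ)`. -/
theorem stmt_7 {n : ℕ} (hn : 1 ≤ n)
    (T : (Fin n → ℝ) → (Fin n → ℝ)) (γ : ℝ) (hγ : γ ∈ Set.Ioo (0 : ℝ) 1)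
    (hT : LipschitzWith (Real.toNNReal γ) T)
    (Qstar : Fin n → ℝ) (hfix : T Qstar = Qstar)
    (Rmax : ℝ) (hR : 0 ≤ Rmax) (hQ : ‖Qstar‖ ≤ Rmax / (1 - γ))
    (Γ : (Fin n → ℝ) →L[ℝ] (Fin n → ℝ))
    (η : ℝ) (hη : 0 ≤ η) (hden : γ * ‖Γ‖ < 1 + η)
    (qe : Fin n → ℝ) (he : (1 + η) • qe = Γ (T qe)) :
    ‖qe - Qstar‖ ≤ ‖Qstar - Γ Qstar‖ / (1 + η - γ * ‖Γ‖) +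
      (η / (1 + η - γ * ‖Γ‖)) * (Rmax / (1 - γ)) := by
  obtain ⟨hγ0, hγ1⟩ := hγ
  set D : ℝ := 1 + η - γ * ‖Γ‖ with hD
  have hDpos : 0 < D := by simp [hD]; linarith
  have key : (1 + η) • (qe - Qstar) =
      (Γ (T qe) - Γ (T Qstar)) + (Γ Qstar - Qstar) - η • Qstar := by
    rw [smul_sub, he, hfix]
    module
  have hlip : ‖T qe - T Qstar‖ ≤ γ * ‖qe - Qstar‖ := by
    have := hT.dist_le_mul qe Qstar
    rw [dist_eq_norm, dist_eq_norm] at this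
    rwa [Real.coe_toNNReal _ (le_of_lt hγ0)] at this
  have h1 : ‖Γ (T qe) - Γ (T Qstar)‖ ≤ ‖Γ‖ * (γ * ‖qe - Qstar‖) := by
    calc ‖Γ (T qe) - Γ (T Qstar)‖ = ‖Γ (T qe - T Qstar)‖ := by rw [map_sub]
      _ ≤ ‖Γ‖ * ‖T qe - T Qstar‖ := Γ.le_opNorm _
      _ ≤ ‖Γ‖ * (γ * ‖qe - Qstar‖) := by
          exact mul_le_mul_of_nonneg_left hlip (norm_nonneg _)
  have hnorm : (1 + η) * ‖qe - Qstar‖ ≤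
      ‖Γ‖ * (γ * ‖qe - Qstar‖) + ‖Qstar - Γ Qstar‖ + η * ‖Qstar‖ := by
    have : ‖(1 + η) • (qe - Qstar)‖ ≤
        ‖Γ (T qe) - Γ (T Qstar)‖ + ‖Γ Qstar - Qstar‖ + ‖η • Qstar‖ := by
      rw [key]
      exact (norm_sub_le _ _).trans (by gcongr; exact norm_add_le _ _)
    rw [norm_smul, Real.norm_of_nonneg (by linarith), norm_smul,
      Real.norm_of_nonneg hη, norm_sub_rev (Γ Qstar)] at this
    linarith [this, h1]
  have hmain : D * ‖qe - Qstar‖ ≤ ‖Qstar - Γ Qstar‖ + η * ‖Qstar‖ := by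
    simp only [hD]; nlinarith [hnorm]
  have hQb : η * ‖Qstar‖ ≤ η * (Rmax / (1 - γ)) :=
    mul_le_mul_of_nonneg_left hQ hη
  have : ‖qe - Qstar‖ ≤ (‖Qstar - Γ Qstar‖ + η * (Rmax / (1 - γ))) / D := by
    rw [le_div_iff₀ hDpos]
    calc ‖qe - Qstar‖ * D = D * ‖qe - Qstar‖ := by ring
      _ ≤ _ := le_trans hmain (by linarith)
  calc ‖qe - Qstar‖ ≤ (‖Qstar - Γ Qstar‖ + η * (Rmax / (1 - γ))) / D := this
    _ = ‖Qstar - Γ Qstar‖ / D + (η / D) * (Rmax / (1 - γ)) := by ring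
end

section
/- Let S and A be nonempty finite sets, μ : S×A → ℝ positive, D = diag(μ), P a row-stochastic (S×A)×S real matrix, γ ∈ (0,1), η ≥ 0, and X a real (S×A)×n matrix with full column rank. Define B : ℝ^{S×A} → ℝ^{S} by (Bq)(s) = max_{a∈A} q(s,a) and the limiting vector field f_∞(θ) = −(1+η) XᵀDX θ + γ XᵀD P B(Xθ). Suppose η > max_{π,(s,a)} [ γ (μᵀ P Π_π)(s,a) / (2 μ(s,a)) ] − (2−γ)/2, where the max is over all deterministic policies π : S → A and all (s,a) ∈ S×A, and Π_π is the 0/1 action-selection matrix of π. Then θᵀ f_∞(θ) < 0 for every nonzero θ ∈ ℝⁿ, and every differentiable θ : [0,∞) → ℝⁿ with θ′(t) = f_∞(θ(t)) for all t ≥ 0 satisfies θ(t) → 0 as t → ∞ (the origin of the limiting ODE is globally asymptotically stable). -/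
open Matrix

/-- The limiting vector field `f_∞(θ) = −(1+η) XᵀDX θ + γ XᵀD P B(Xθ)`. -/
noncomputable def limitField {S A : Type*} [Fintype S] [Fintype A] [Nonempty A]
    [DecidableEq S] [DecidableEq A] {n : ℕ}
    (μ : S × A → ℝ) (P : Matrix (S × A) S ℝ) (γ η : ℝ)
    (X : Matrix (S × A) (Fin n) ℝ) (θ : Fin n → ℝ) : Fin n → ℝ :=
  -((1 + η) • ((Xᵀ * diagonal μ * X) *ᵥ θ)) +
    γ • ((Xᵀ * diagonal μ * P) *ᵥ greedyMax (X *ᵥ θ))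

lemma exists_greedy {S A : Type*} [Fintype A] [Nonempty A] (v : S × A → ℝ) :
    ∃ π : S → A, ∀ s, greedyMax v s = v (s, π s) := by
  choose π hmem hval using fun s =>
    Finset.exists_mem_eq_sup' (Finset.univ_nonempty) (fun a => v (s, a))
  exact ⟨π, fun s => hval s⟩

lemma key_bound {S A : Type*} [Fintype S] [Fintype A] [Nonempty S] [Nonempty A]
    [DecidableEq S] [DecidableEq A] {n : ℕ}
    (μ : S × A → ℝ) (hμ : ∀ p, 0 < μ p)
    (P : Matrix (S × A) S ℝ) (hP0 : ∀ p s, 0 ≤ P p s) (hP1 : ∀ p, ∑ s, P p s = 1)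
    (γ : ℝ) (hγ0 : 0 < γ)
    (X : Matrix (S × A) (Fin n) ℝ)
    (Pi : (S → A) → Matrix S (S × A) ℝ)
    (hPi : ∀ (π : S → A) (s : S) (p : S × A),
      Pi π s p = if p.1 = s ∧ p.2 = π s then 1 else 0)
    (η : ℝ) (M : ℝ)
    (hM : M = Finset.univ.sup' Finset.univ_nonempty
        fun q : (S → A) × (S × A) =>
          γ * (μ ᵥ* (P * Pi q.1)) q.2 / (2 * μ q.2))
    (θ : Fin n → ℝ) :
    θ ⬝ᵥ limitField μ P γ η X θ ≤
      (M + γ / 2 - 1 - η) * ∑ p, μ p * (X *ᵥ θ) p ^ 2 := by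
  set v : S × A → ℝ := X *ᵥ θ with hv
  set Q : ℝ := ∑ p, μ p * v p ^ 2 with hQ
  obtain ⟨π, hgr⟩ := exists_greedy v
  -- dot product identities
  have edot1 : θ ⬝ᵥ (Xᵀ * diagonal μ * X) *ᵥ θ = ∑ p, μ p * v p * (X *ᵥ θ) p := by
    rw [Matrix.mul_assoc, ← mulVec_mulVec, ← mulVec_mulVec, dotProduct_mulVec,
      vecMul_transpose, ← hv]
    simp only [dotProduct, mulVec_diagonal]
    exact Finset.sum_congr rfl fun p _ => by ring
  have edot2 : θ ⬝ᵥ (Xᵀ * diagonal μ * P) *ᵥ greedyMax v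
      = ∑ p, μ p * v p * (P *ᵥ greedyMax v) p := by
    rw [Matrix.mul_assoc, ← mulVec_mulVec, ← mulVec_mulVec, dotProduct_mulVec,
      vecMul_transpose, ← hv]
    simp only [dotProduct, mulVec_diagonal]
    exact Finset.sum_congr rfl fun p _ => by ring
  have hPg : ∀ p, (P *ᵥ greedyMax v) p = ∑ s, P p s * v (s, π s) := by
    intro p
    simp only [mulVec, dotProduct]
    exact Finset.sum_congr rfl fun s _ => by rw [hgr s]
  have hL : θ ⬝ᵥ limitField μ P γ η X θ
      = -((1 + η) * Q) + γ * ∑ p, μ p * v p * (∑ s, P p s * v (s, π s)) := by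
    unfold limitField
    rw [dotProduct_add, dotProduct_neg, dotProduct_smul, dotProduct_smul]
    have e1 : θ ⬝ᵥ (Xᵀ * diagonal μ * X) *ᵥ θ = Q := by
      rw [edot1, hQ]
      exact Finset.sum_congr rfl fun p _ => by rw [← hv]; ring
    have e2 : θ ⬝ᵥ (Xᵀ * diagonal μ * P) *ᵥ greedyMax v
        = ∑ p, μ p * v p * (∑ s, P p s * v (s, π s)) := by
      rw [edot2]
      exact Finset.sum_congr rfl fun p _ => by rw [hPg p]
    rw [e1, e2]
    simp [smul_eq_mul]
  -- nonnegativity facts about M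
  have hPPi : ∀ (π' : S → A) p q, 0 ≤ (P * Pi π') p q := by
    intro π' p q
    rw [Matrix.mul_apply]
    refine Finset.sum_nonneg fun s' _ => mul_nonneg (hP0 _ _) ?_
    rw [hPi]; split <;> norm_num
  have hMge : ∀ (π' : S → A) (q : S × A),
      γ * (μ ᵥ* (P * Pi π')) q / (2 * μ q) ≤ M := by
    intro π' q
    rw [hM]
    exact Finset.le_sup' (f := fun q : (S → A) × (S × A) =>
      γ * (μ ᵥ* (P * Pi q.1)) q.2 / (2 * μ q.2)) (Finset.mem_univ (π', q))
  have hM0 : 0 ≤ M := by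
    refine le_trans ?_ (hMge (fun _ => Classical.arbitrary A)
      (Classical.arbitrary (S × A)))
    have h1 : 0 ≤ (μ ᵥ* (P * Pi fun _ => Classical.arbitrary A))
        (Classical.arbitrary (S × A)) := by
      simp only [Matrix.vecMul, dotProduct]
      exact Finset.sum_nonneg fun p _ => mul_nonneg (hμ p).le (hPPi _ _ _)
    have h2 : (0:ℝ) < 2 * μ (Classical.arbitrary (S × A)) := by
      have := hμ (Classical.arbitrary (S × A)); linarith
    exact div_nonneg (mul_nonneg hγ0.le h1) h2.le
  -- cross term bound
  set W : ℝ := ∑ s, (μ ᵥ* P) s * v (s, π s) ^ 2 with hW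
  have hcross : ∑ p, μ p * v p * (∑ s, P p s * v (s, π s)) ≤ Q / 2 + W / 2 := by
    have hT : ∑ p, μ p * v p * (∑ s, P p s * v (s, π s))
        = ∑ p, ∑ s, μ p * v p * (P p s * v (s, π s)) :=
      Finset.sum_congr rfl fun p _ => Finset.mul_sum _ _ _
    have hterm : ∀ p s, μ p * v p * (P p s * v (s, π s))
        ≤ (μ p * P p s * v p ^ 2 + μ p * P p s * v (s, π s) ^ 2) / 2 := by
      intro p s
      have h1 : 0 ≤ μ p * P p s := mul_nonneg (hμ p).le (hP0 p s)
      nlinarith [mul_nonneg h1 (sq_nonneg (v p - v (s, π s)))]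
    have hA : ∑ p, ∑ s, μ p * P p s * v p ^ 2 = Q := by
      rw [hQ]
      refine Finset.sum_congr rfl fun p _ => ?_
      calc ∑ s, μ p * P p s * v p ^ 2 = μ p * v p ^ 2 * ∑ s, P p s := by
            rw [Finset.mul_sum]
            exact Finset.sum_congr rfl fun s _ => by ring
        _ = μ p * v p ^ 2 := by rw [hP1 p, mul_one]
    have hB : ∑ p, ∑ s, μ p * P p s * v (s, π s) ^ 2 = W := by
      rw [hW, Finset.sum_comm]
      refine Finset.sum_congr rfl fun s _ => ?_
      simp only [Matrix.vecMul, dotProduct, Finset.sum_mul]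
      try exact Finset.sum_congr rfl fun p _ => by ring
    calc ∑ p, μ p * v p * (∑ s, P p s * v (s, π s))
        = ∑ p, ∑ s, μ p * v p * (P p s * v (s, π s)) := hT
      _ ≤ ∑ p, ∑ s, (μ p * P p s * v p ^ 2 + μ p * P p s * v (s, π s) ^ 2) / 2 :=
          Finset.sum_le_sum fun p _ => Finset.sum_le_sum fun s _ => hterm p s
      _ = (∑ p, ∑ s, μ p * P p s * v p ^ 2) / 2
          + (∑ p, ∑ s, μ p * P p s * v (s, π s) ^ 2) / 2 := by
          simp only [Finset.sum_div]
          rw [← Finset.sum_add_distrib]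
          refine Finset.sum_congr rfl fun p _ => ?_
          rw [← Finset.sum_add_distrib]
          exact Finset.sum_congr rfl fun s _ => by ring
      _ = Q / 2 + W / 2 := by rw [hA, hB]
  -- γ * W ≤ 2 * M * Q
  have hPiPs : ∀ s : S, (μ ᵥ* (P * Pi π)) (s, π s) = (μ ᵥ* P) s := by
    intro s
    simp only [Matrix.vecMul, dotProduct, Matrix.mul_apply]
    refine Finset.sum_congr rfl fun p _ => ?_
    congr 1
    rw [Finset.sum_eq_single s]
    · rw [hPi]; simp
    · intro b _ hb
      rw [hPi]
      have : ¬((s, π s).1 = b ∧ (s, π s).2 = π b) := by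
        intro h; exact hb (h.1.symm)
      rw [if_neg this, mul_zero]
    · intro h; exact absurd (Finset.mem_univ s) h
  have hγW : γ * W ≤ 2 * M * Q := by
    have hstep : ∀ s : S, γ * ((μ ᵥ* P) s * v (s, π s) ^ 2)
        ≤ 2 * M * (μ (s, π s) * v (s, π s) ^ 2) := by
      intro s
      have h1 := hMge π (s, π s)
      rw [hPiPs s] at h1
      have hpos : (0:ℝ) < 2 * μ (s, π s) := by
        have := hμ (s, π s); linarith
      rw [div_le_iff₀ hpos] at h1
      have h2 : 0 ≤ v (s, π s) ^ 2 := sq_nonneg _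
      nlinarith
    have hsum_le : ∑ s, μ (s, π s) * v (s, π s) ^ 2 ≤ Q := by
      have hinj : ∀ x ∈ Finset.univ (α := S), ∀ y ∈ Finset.univ (α := S),
          (fun s : S => (s, π s)) x = (fun s : S => (s, π s)) y → x = y := by
        intro x _ y _ h
        exact (Prod.ext_iff.mp h).1
      have himg := Finset.sum_image (s := Finset.univ)
        (g := fun s : S => (s, π s)) (f := fun q : S × A => μ q * v q ^ 2) hinj
      rw [hQ, ← himg]
      refine Finset.sum_le_sum_of_subset_of_nonneg (Finset.subset_univ _) ?_
      intro q _ _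
      have := hμ q
      positivity
    calc γ * W = ∑ s, γ * ((μ ᵥ* P) s * v (s, π s) ^ 2) := by
          rw [hW, Finset.mul_sum]
      _ ≤ ∑ s, 2 * M * (μ (s, π s) * v (s, π s) ^ 2) :=
          Finset.sum_le_sum fun s _ => hstep s
      _ = 2 * M * ∑ s, μ (s, π s) * v (s, π s) ^ 2 := by rw [Finset.mul_sum]
      _ ≤ 2 * M * Q := by
          have h2M : 0 ≤ 2 * M := by linarith
          exact mul_le_mul_of_nonneg_left hsum_le h2M
  -- assemble
  have hγcross : γ * (∑ p, μ p * v p * (∑ s, P p s * v (s, π s)))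
      ≤ γ * (Q / 2 + W / 2) := mul_le_mul_of_nonneg_left hcross hγ0.le
  rw [hL]
  have hQW : γ * (Q / 2 + W / 2) = γ * Q / 2 + γ * W / 2 := by ring
  nlinarith [hγW, hγcross]

lemma dot_pos {S A : Type*} [Fintype S] [Fintype A] {n : ℕ}
    (μ : S × A → ℝ) (hμ : ∀ p, 0 < μ p)
    (X : Matrix (S × A) (Fin n) ℝ) (hX : Function.Injective X.mulVec)
    (θ : Fin n → ℝ) (hθ : θ ≠ 0) : 0 < ∑ p, μ p * (X *ᵥ θ) p ^ 2 := by
  have hv : X *ᵥ θ ≠ 0 := by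
    intro h
    exact hθ (hX (by rw [h, mulVec_zero]))
  obtain ⟨p, hp⟩ := Function.ne_iff.mp hv
  refine Finset.sum_pos' (fun q _ => mul_nonneg (hμ q).le (sq_nonneg _)) ⟨p, Finset.mem_univ p, ?_⟩
  have hp' : (X *ᵥ θ) p ≠ 0 := by simpa using hp
  exact mul_pos (hμ p) ((sq_nonneg _).lt_of_ne' (pow_ne_zero 2 hp'))

lemma quad_lower {S A : Type*} [Fintype S] [Fintype A] {n : ℕ}
    (μ : S × A → ℝ) (hμ : ∀ p, 0 < μ p)
    (X : Matrix (S × A) (Fin n) ℝ) (hX : Function.Injective X.mulVec) :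
    ∃ c > 0, ∀ θ : Fin n → ℝ, c * (θ ⬝ᵥ θ) ≤ ∑ p, μ p * (X *ᵥ θ) p ^ 2 := by
  classical
  set Q : (Fin n → ℝ) → ℝ := fun θ => ∑ p, μ p * (X *ᵥ θ) p ^ 2 with hQ
  rcases Nat.eq_zero_or_pos n with hn | hn
  · subst hn
    refine ⟨1, one_pos, fun θ => ?_⟩
    have h1 : θ ⬝ᵥ θ = 0 := by simp [dotProduct]
    have h2 : 0 ≤ Q θ := Finset.sum_nonneg fun p _ => mul_nonneg (hμ p).le (sq_nonneg _)
    rw [h1, mul_zero]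
    exact h2
  · set K : Set (Fin n → ℝ) := {θ | θ ⬝ᵥ θ = 1} with hK
    have hdotcont : Continuous fun θ : Fin n → ℝ => θ ⬝ᵥ θ := by
      simp only [dotProduct]
      exact continuous_finset_sum _ fun i _ =>
        (continuous_apply i).mul (continuous_apply i)
    have hKclosed : IsClosed K := isClosed_eq hdotcont continuous_const
    have hKsub : K ⊆ Metric.closedBall 0 1 := by
      intro θ hθ
      rw [Metric.mem_closedBall, dist_zero_right]
      rw [pi_norm_le_iff_of_nonneg zero_le_one]
      intro i
      rw [Real.norm_eq_abs, abs_le_one_iff_mul_self_le_one]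
      calc θ i * θ i ≤ ∑ j, θ j * θ j :=
            Finset.single_le_sum (fun j _ => mul_self_nonneg (θ j))
              (Finset.mem_univ i)
        _ = 1 := hθ
    have hKcomp : IsCompact K :=
      (isCompact_closedBall (0 : Fin n → ℝ) 1).of_isClosed_subset hKclosed hKsub
    have hKne : K.Nonempty := by
      refine ⟨Pi.single ⟨0, hn⟩ 1, ?_⟩
      simp [hK, dotProduct, Pi.single_apply]
    have hQcont : Continuous Q := by
      have hfe : Q = fun θ => ∑ p, μ p * (∑ i, X p i * θ i) ^ 2 := by
        funext θ
        exact Finset.sum_congr rfl fun p _ => by simp [mulVec, dotProduct]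
      rw [hfe]
      exact continuous_finset_sum _ fun p _ =>
        continuous_const.mul ((continuous_finset_sum _ fun i _ =>
          continuous_const.mul (continuous_apply i)).pow 2)
    obtain ⟨u, huK, humin'⟩ := hKcomp.exists_isMinOn hKne hQcont.continuousOn
    have humin : ∀ y ∈ K, Q u ≤ Q y := fun y hy => humin' hy
    have huK' : u ⬝ᵥ u = 1 := huK
    have hu0 : u ≠ 0 := by
      intro h
      rw [h] at huK'
      simp [dotProduct] at huK'
    refine ⟨Q u, dot_pos μ hμ X hX u hu0, fun θ => ?_⟩
    by_cases hθ : θ = 0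
    · subst hθ
      simp [hQ, dotProduct, Matrix.mulVec_zero]
    · have hr : 0 < θ ⬝ᵥ θ := by
        obtain ⟨i, hi⟩ := Function.ne_iff.mp hθ
        refine Finset.sum_pos' (fun j _ => mul_self_nonneg _)
          ⟨i, Finset.mem_univ i, ?_⟩
        have hi' : θ i ≠ 0 := by simpa using hi
        exact mul_self_pos.mpr hi'
      set r : ℝ := θ ⬝ᵥ θ with hrdef
      have hsq : 0 < Real.sqrt r := Real.sqrt_pos.mpr hr
      set u' : Fin n → ℝ := (Real.sqrt r)⁻¹ • θ with hu'
      have hu'K : u' ∈ K := by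
        show u' ⬝ᵥ u' = 1
        rw [hu', smul_dotProduct, dotProduct_smul, smul_eq_mul, smul_eq_mul,
          ← hrdef, ← mul_assoc, ← mul_inv, Real.mul_self_sqrt hr.le]
        exact inv_mul_cancel₀ hr.ne'
      have hle := humin u' hu'K
      have hQs : Q u' = (Real.sqrt r)⁻¹ ^ 2 * Q θ := by
        rw [hQ, hu', Finset.mul_sum]
        refine Finset.sum_congr rfl fun p _ => ?_
        rw [mulVec_smul, Pi.smul_apply, smul_eq_mul]
        ring
      have h2 : (Real.sqrt r)⁻¹ ^ 2 = r⁻¹ := by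
        rw [inv_pow, Real.sq_sqrt hr.le]
      rw [hQs, h2] at hle
      calc Q u * (θ ⬝ᵥ θ) = Q u * r := rfl
        _ ≤ r⁻¹ * Q θ * r := mul_le_mul_of_nonneg_right hle hr.le
        _ = Q θ := by field_simp

/-- Under the regularization condition on `η`, the limiting vector field satisfies
`θᵀ f_∞(θ) < 0` for every nonzero `θ`, and the origin of the limiting ODE
`θ′ = f_∞(θ)` is globally asymptotically stable. -/
theorem stmt_10 {S A : Type*} [Fintype S] [Fintype A] [Nonempty S] [Nonempty A]
    [DecidableEq S] [DecidableEq A] {n : ℕ}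
    (μ : S × A → ℝ) (hμ : ∀ p, 0 < μ p)
    (P : Matrix (S × A) S ℝ) (hP0 : ∀ p s, 0 ≤ P p s) (hP1 : ∀ p, ∑ s, P p s = 1)
    (γ : ℝ) (hγ : γ ∈ Set.Ioo (0 : ℝ) 1)
    (X : Matrix (S × A) (Fin n) ℝ) (hX : Function.Injective X.mulVec)
    (Pi : (S → A) → Matrix S (S × A) ℝ)
    (hPi : ∀ (π : S → A) (s : S) (p : S × A),
      Pi π s p = if p.1 = s ∧ p.2 = π s then 1 else 0)
    (η : ℝ) (hη0 : 0 ≤ η)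
    (hη : η > (Finset.univ.sup' Finset.univ_nonempty
        fun q : (S → A) × (S × A) =>
          γ * (μ ᵥ* (P * Pi q.1)) q.2 / (2 * μ q.2)) - (2 - γ) / 2) :
    (∀ θ : Fin n → ℝ, θ ≠ 0 → θ ⬝ᵥ limitField μ P γ η X θ < 0) ∧
    (∀ θ : ℝ → Fin n → ℝ,
      (∀ t : ℝ, 0 ≤ t → HasDerivAt θ (limitField μ P γ η X (θ t)) t) →
      Filter.Tendsto θ Filter.atTop (nhds 0)) := by
  obtain ⟨hγ0, hγ1⟩ := hγ
  set M : ℝ := Finset.univ.sup' Finset.univ_nonempty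
      (fun q : (S → A) × (S × A) =>
        γ * (μ ᵥ* (P * Pi q.1)) q.2 / (2 * μ q.2)) with hM
  have hε : 0 < 1 + η - γ / 2 - M := by
    have : η > M - (2 - γ) / 2 := hη
    linarith
  have hkey : ∀ θ : Fin n → ℝ, θ ⬝ᵥ limitField μ P γ η X θ ≤
      (M + γ / 2 - 1 - η) * ∑ p, μ p * (X *ᵥ θ) p ^ 2 :=
    fun θ => key_bound μ hμ P hP0 hP1 γ hγ0 X Pi hPi η M hM θ
  obtain ⟨c, hc0, hc⟩ := quad_lower μ hμ X hX
  constructor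
  · intro θ hθ
    have hQpos := dot_pos μ hμ X hX θ hθ
    have h1 := hkey θ
    nlinarith
  · intro θf hODE
    set k : ℝ := 2 * (1 + η - γ / 2 - M) * c with hk
    have hk0 : 0 < k := mul_pos (by linarith) hc0
    set W : ℝ → ℝ := fun t => θf t ⬝ᵥ θf t with hWdef
    have hW0 : ∀ t, 0 ≤ W t :=
      fun t => Finset.sum_nonneg fun i _ => mul_self_nonneg _
    have hWd : ∀ t, 0 ≤ t →
        HasDerivAt W (2 * (θf t ⬝ᵥ limitField μ P γ η X (θf t))) t := by
      intro t ht
      have hcoord := hasDerivAt_pi.mp (hODE t ht)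
      have hsum : HasDerivAt (fun u => ∑ i, θf u i * θf u i)
          (∑ i, (limitField μ P γ η X (θf t) i * θf t i
            + θf t i * limitField μ P γ η X (θf t) i)) t :=
        HasDerivAt.fun_sum fun i _ => (hcoord i).mul (hcoord i)
      have heq : (∑ i, (limitField μ P γ η X (θf t) i * θf t i
            + θf t i * limitField μ P γ η X (θf t) i))
          = 2 * (θf t ⬝ᵥ limitField μ P γ η X (θf t)) := by
        simp only [dotProduct, Finset.mul_sum]
        exact Finset.sum_congr rfl fun j _ => by ring
      rw [heq] at hsum
      exact hsum
    have hWle : ∀ t, 2 * (θf t ⬝ᵥ limitField μ P γ η X (θf t)) ≤ -k * W t := by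
      intro t
      have h1 := hkey (θf t)
      have h2 := hc (θf t)
      have h3 : (1 + η - γ / 2 - M) * (c * (θf t ⬝ᵥ θf t))
          ≤ (1 + η - γ / 2 - M) * ∑ p, μ p * (X *ᵥ θf t) p ^ 2 :=
        mul_le_mul_of_nonneg_left h2 hε.le
      have hWt : W t = θf t ⬝ᵥ θf t := rfl
      rw [hWt, hk]
      nlinarith
    have hEd : ∀ t : ℝ, HasDerivAt (fun u => Real.exp (k * u))
        (k * Real.exp (k * t)) t := by
      intro t
      have h1 : HasDerivAt (fun u : ℝ => k * u) k t := by
        simpa using (hasDerivAt_id t).const_mul k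
      have h2 := h1.exp
      simpa [mul_comm] using h2
    set g : ℝ → ℝ := fun t => W t * Real.exp (k * t) with hgdef
    have hgd : ∀ t, 0 ≤ t → HasDerivAt g
        (2 * (θf t ⬝ᵥ limitField μ P γ η X (θf t)) * Real.exp (k * t)
          + W t * (k * Real.exp (k * t))) t :=
      fun t ht => (hWd t ht).mul (hEd t)
    have hganti : AntitoneOn g (Set.Ici 0) := by
      apply antitoneOn_of_deriv_nonpos (convex_Ici 0)
      · exact fun t ht => ((hgd t ht).continuousAt).continuousWithinAt
      · rw [interior_Ici]
        exact fun t ht =>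
          ((hgd t (le_of_lt ht)).differentiableAt).differentiableWithinAt
      · rw [interior_Ici]
        intro t ht
        rw [(hgd t ht.le).deriv]
        have h1 := hWle t
        have hE : 0 < Real.exp (k * t) := Real.exp_pos _
        nlinarith [mul_le_mul_of_nonneg_right h1 hE.le]
    have hWbound : ∀ t, 0 ≤ t → W t ≤ W 0 / Real.exp (k * t) := by
      intro t ht
      have hle := hganti (Set.self_mem_Ici) (Set.mem_Ici.mpr ht) ht
      have hg0 : g 0 = W 0 := by simp [hgdef]
      rw [le_div_iff₀ (Real.exp_pos _)]
      calc W t * Real.exp (k * t) = g t := rfl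
        _ ≤ g 0 := hle
        _ = W 0 := hg0
    have hWtend : Filter.Tendsto W Filter.atTop (nhds 0) := by
      have h1 : Filter.Tendsto (fun t : ℝ => k * t) Filter.atTop Filter.atTop :=
        Filter.Tendsto.const_mul_atTop hk0 Filter.tendsto_id
      have h2 : Filter.Tendsto (fun t => Real.exp (k * t))
          Filter.atTop Filter.atTop := Real.tendsto_exp_atTop.comp h1
      have hup : Filter.Tendsto (fun t => W 0 / Real.exp (k * t))
          Filter.atTop (nhds 0) := by
        have h3 := h2.inv_tendsto_atTop.const_mul (W 0)
        simpa [div_eq_mul_inv] using h3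
      refine tendsto_of_tendsto_of_tendsto_of_le_of_le' tendsto_const_nhds hup
        (Filter.Eventually.of_forall hW0) ?_
      filter_upwards [Filter.eventually_ge_atTop (0 : ℝ)] with t ht
      exact hWbound t ht
    rw [tendsto_pi_nhds]
    intro i
    have hsqrt : Filter.Tendsto (fun t => Real.sqrt (W t))
        Filter.atTop (nhds 0) := by
      have := (Real.continuous_sqrt.tendsto 0).comp hWtend
      simpa [Function.comp_def] using this
    have hlow : Filter.Tendsto (fun t => -Real.sqrt (W t))
        Filter.atTop (nhds 0) := by simpa using hsqrt.neg
    have habs : ∀ t, |θf t i| ≤ Real.sqrt (W t) := by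
      intro t
      have h1 : θf t i * θf t i ≤ W t :=
        Finset.single_le_sum (fun j _ => mul_self_nonneg (θf t j))
          (Finset.mem_univ i)
      calc |θf t i| = Real.sqrt (θf t i * θf t i) :=
            (Real.sqrt_mul_self_eq_abs _).symm
        _ ≤ Real.sqrt (W t) := Real.sqrt_le_sqrt h1
    have : Filter.Tendsto (fun t => θf t i) Filter.atTop (nhds 0) := by
      refine tendsto_of_tendsto_of_tendsto_of_le_of_le hlow hsqrt ?_ ?_
      · intro t
        have h := abs_le.mp (habs t)
        simpa using h.1
      · intro t
        simpa using le_trans (le_abs_self _) (habs t)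
    simpa using this
end

section
/- Let f̄, f̲ : ℝⁿ → ℝⁿ be globally Lipschitz continuous. Assume f̄ is quasi-monotone increasing and f̲(v) ≤ f̄(v) componentwise for all v ∈ ℝⁿ. Let x, v : [0,∞) → ℝⁿ be differentiable with x′(t) = f̄(x(t)) and v′(t) = f̲(v(t)) for all t ≥ 0, and suppose v(0) ≤ x(0) componentwise. Then v(t) ≤ x(t) componentwise for all t ≥ 0. -/
open Set Filter Topology

/-- Vector comparison principle: if `f̄` is globally Lipschitz and quasi-monotone
increasing, `f̲` is globally Lipschitz with `f̲(v) ≤ f̄(v)` componentwise, and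
`x′ = f̄(x)`, `v′ = f̲(v)` with `v(0) ≤ x(0)` componentwise, then `v(t) ≤ x(t)`
componentwise for all `t ≥ 0`. -/
theorem stmt_11 {n : ℕ} (fbar flow : (Fin n → ℝ) → (Fin n → ℝ))
    (hbarLip : ∃ K : NNReal, LipschitzWith K fbar)
    (hlowLip : ∃ K : NNReal, LipschitzWith K flow)
    (hquasi : ∀ (i : Fin n) (y z : Fin n → ℝ), y i = z i →
      (∀ j : Fin n, j ≠ i → y j ≤ z j) → fbar y i ≤ fbar z i)
    (hle : ∀ v : Fin n → ℝ, ∀ i, flow v i ≤ fbar v i)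
    (x v : ℝ → Fin n → ℝ)
    (hx : ∀ t : ℝ, 0 ≤ t → HasDerivAt x (fbar (x t)) t)
    (hv : ∀ t : ℝ, 0 ≤ t → HasDerivAt v (flow (v t)) t)
    (h0 : ∀ i, v 0 i ≤ x 0 i) :
    ∀ t : ℝ, 0 ≤ t → ∀ i, v t i ≤ x t i := by
  intro T hT i0
  obtain ⟨K, hK⟩ := hbarLip
  have hne : (Finset.univ : Finset (Fin n)).Nonempty := ⟨i0, Finset.mem_univ _⟩
  haveI : Nonempty (Fin n) := ⟨i0⟩
  set u : ℝ → Fin n → ℝ := fun t j => v t j - x t j with hu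
  set g : ℝ → ℝ := fun t => Finset.univ.sup' hne (fun j => max (u t j) 0) with hg
  have hle_g : ∀ t j, max (u t j) 0 ≤ g t := by
    intro t j
    simp only [hg]
    exact Finset.le_sup' (fun j => max (u t j) 0) (Finset.mem_univ j)
  have hg_nonneg : ∀ t, 0 ≤ g t := fun t =>
    le_trans (le_max_right _ _) (hle_g t i0)
  have hu_deriv : ∀ t, 0 ≤ t → ∀ j,
      HasDerivAt (fun s => u s j) (flow (v t) j - fbar (x t) j) t := by
    intro t ht j
    have := hasDerivAt_pi.1 ((hv t ht).sub (hx t ht)) j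
    simpa [hu] using this
  have hu_contAt : ∀ t, 0 ≤ t → ∀ j, ContinuousAt (fun s => u s j) t := by
    intro t ht j
    exact (hu_deriv t ht j).continuousAt
  have hg_cont : ContinuousOn g (Icc 0 T) := by
    intro t ht
    have : ContinuousAt g t := by
      simp only [hg]
      apply ContinuousAt.finset_sup'_apply hne
      intro j _
      exact (hu_contAt t ht.1 j).max continuousAt_const
    exact this.continuousWithinAt
  -- Dini derivative bound
  have hslope : ∀ t ∈ Ico (0:ℝ) T, ∀ r, (K : ℝ) * g t < r →
      ∃ᶠ z in 𝓝[>] t, (z - t)⁻¹ * (g z - g t) < r := by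
    intro t ht r hr
    have hr0 : 0 < r := lt_of_le_of_lt (mul_nonneg K.2 (hg_nonneg t)) hr
    have hall : ∀ j : Fin n, ∀ᶠ z in 𝓝[>] t,
        (z - t)⁻¹ * (max (u z j) 0 - g t) < r := by
      intro j
      rcases lt_or_eq_of_le (hle_g t j) with hlt | heq
      · -- below the max: numerator eventually negative
        have hc : ContinuousAt (fun s => max (u s j) 0) t :=
          (hu_contAt t ht.1 j).max continuousAt_const
        have hev : ∀ᶠ z in 𝓝 t, max (u z j) 0 < g t :=
          hc.eventually_lt continuousAt_const hlt
        filter_upwards [nhdsWithin_le_nhds hev, self_mem_nhdsWithin] with z hz hz'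
        have hpos : (0:ℝ) < z - t := sub_pos.2 hz'
        calc (z - t)⁻¹ * (max (u z j) 0 - g t)
            ≤ 0 := le_of_lt (mul_neg_of_pos_of_neg (inv_pos.2 hpos) (sub_neg.2 hz))
          _ < r := hr0
      · rcases lt_or_ge (u t j) 0 with hneg | hpos
        · -- u t j < 0 so g t = 0, eventually max = 0
          have hgt0 : g t = 0 := by rw [← heq, max_eq_right hneg.le]
          have hev : ∀ᶠ z in 𝓝 t, u z j < 0 :=
            (hu_contAt t ht.1 j).eventually_lt continuousAt_const hneg
          filter_upwards [nhdsWithin_le_nhds hev] with z hz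
          simp [max_eq_right hz.le, hgt0, hr0]
        · -- u t j = g t: use quasimonotonicity and Lipschitz bound
          have hutj : u t j = g t := by rw [← heq, max_eq_left hpos]
          have hd : flow (v t) j - fbar (x t) j ≤ (K : ℝ) * g t := by
            have h1 : flow (v t) j ≤ fbar (v t) j := hle _ j
            have h2 : fbar (v t) j ≤ fbar (fun k => x t k + g t) j := by
              apply hquasi j
              · have := hutj; simp only [hu] at this; linarith
              · intro k _
                have := hle_g t k
                have h3 : u t k ≤ g t := le_trans (le_max_left _ _) this
                simp only [hu] at h3; linarith
            have h4 : fbar (fun k => x t k + g t) j - fbar (x t) j ≤ (K : ℝ) * g t := by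
              have hdist : dist (fbar (fun k => x t k + g t)) (fbar (x t))
                  ≤ K * dist (fun k => x t k + g t) (x t) := hK.dist_le_mul _ _
              have hd2 : dist (fun k => x t k + g t) (x t : Fin n → ℝ) = g t := by
                have : (fun k => x t k + g t) - x t = (fun _ => g t) := by
                  funext k; simp
                rw [dist_eq_norm, this]
                rw [pi_norm_const (g t)]
                exact abs_of_nonneg (hg_nonneg t)
              have hcomp : dist (fbar (fun k => x t k + g t) j) (fbar (x t) j)
                  ≤ dist (fbar (fun k => x t k + g t)) (fbar (x t)) :=
                dist_le_pi_dist _ _ j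
              rw [Real.dist_eq] at hcomp
              rw [hd2] at hdist
              have habs := le_abs_self (fbar (fun k => x t k + g t) j - fbar (x t) j)
              linarith
            linarith
          -- slope of u_j eventually < r
          have hder := hu_deriv t ht.1 j
          have hts : Tendsto (slope (fun s => u s j) t) (𝓝[>] t)
              (𝓝 (flow (v t) j - fbar (x t) j)) :=
            (hasDerivAt_iff_tendsto_slope.1 hder).mono_left
              (nhdsWithin_mono _ (fun z hz => ne_of_gt hz))
          have hev : ∀ᶠ z in 𝓝[>] t, slope (fun s => u s j) t z < r :=
            hts.eventually_lt_const (lt_of_le_of_lt hd hr)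
          filter_upwards [hev, self_mem_nhdsWithin] with z hz hz'
          have hpos' : (0:ℝ) < z - t := sub_pos.2 hz'
          have hnum : max (u z j) 0 - g t ≤ max (u z j - u t j) 0 := by
            rw [← hutj]
            rcases le_total (u z j) 0 with h | h
            · rw [max_eq_right h]
              linarith [le_max_right (u z j - u t j) (0:ℝ)]
            · rw [max_eq_left h]
              linarith [le_max_left (u z j - u t j) (0:ℝ)]
          have hslope_eq : slope (fun s => u s j) t z = (z - t)⁻¹ * (u z j - u t j) := by
            rw [slope_def_field]; field_simp
          calc (z - t)⁻¹ * (max (u z j) 0 - g t)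
              ≤ (z - t)⁻¹ * max (u z j - u t j) 0 :=
                mul_le_mul_of_nonneg_left hnum (inv_pos.2 hpos').le
            _ = max ((z - t)⁻¹ * (u z j - u t j)) 0 := by
                rw [mul_max_of_nonneg _ _ (inv_pos.2 hpos').le]; simp
            _ < r := by
                rw [hslope_eq] at hz
                exact max_lt hz hr0
    have hallev : ∀ᶠ z in 𝓝[>] t, ∀ j, (z - t)⁻¹ * (max (u z j) 0 - g t) < r :=
      eventually_all.2 hall
    apply Eventually.frequently
    filter_upwards [hallev] with z hz
    obtain ⟨j, _, hj⟩ := Finset.exists_mem_eq_sup' hne (fun j => max (u z j) 0)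
    calc (z - t)⁻¹ * (g z - g t) = (z - t)⁻¹ * (max (u z j) 0 - g t) := by simp only [hg]; rw [hj]
      _ < r := hz j
  have hkey : ∀ s ∈ Icc (0:ℝ) T, g s ≤ gronwallBound 0 (K:ℝ) 0 (s - 0) := by
    apply le_gronwallBound_of_liminf_deriv_right_le (f' := fun t => (K:ℝ) * g t) hg_cont hslope
    · simp only [hg]
      apply Finset.sup'_le
      intro j _
      have := h0 j
      simp only [hu]
      apply max_le (by linarith) le_rfl
    · intro s _; simp
  have hgT : g T ≤ 0 := by
    have := hkey T ⟨hT, le_rfl⟩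
    rwa [gronwallBound_ε0_δ0] at this
  have := le_trans (le_trans (le_max_left (u T i0) 0) (hle_g T i0)) hgT
  simp only [hu] at this
  linarith
end

section
/- Let S and A be nonempty finite sets, μ : S×A → ℝ positive, D = diag(μ), P an (S×A)×S real matrix with nonnegative entries, η ≥ 0, γ ≥ 0, c ∈ ℝⁿ, and let X be a real (S×A)×n matrix with nonnegative entries such that Λ := XᵀDX is a diagonal matrix. Define B : ℝ^{S×A} → ℝ^{S} by (Bq)(s) = max_{a∈A} q(s,a) and f̄(y) = −(1+η) Λ y + γ XᵀD P B(Xy) + c. Then f̄ is quasi-monotone increasing: for every i ∈ {1,…,n} and every y, z ∈ ℝⁿ with y_i = z_i and y_j ≤ z_j for all j ≠ i, one has f̄_i(y) ≤ f̄_i(z). -/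
open Matrix

/-- If the feature matrix `X` has nonnegative entries, `Λ = XᵀDX` is diagonal, `P` has
nonnegative entries, and `γ, η ≥ 0`, then
`f̄(y) = −(1+η) Λ y + γ XᵀD P B(Xy) + c` is quasi-monotone increasing. -/
theorem stmt_12 {S A : Type*} [Fintype S] [Fintype A] [Nonempty S] [Nonempty A]
    [DecidableEq S] [DecidableEq A] {n : ℕ}
    (μ : S × A → ℝ) (hμ : ∀ p, 0 < μ p)
    (P : Matrix (S × A) S ℝ) (hP0 : ∀ p s, 0 ≤ P p s)
    (η : ℝ) (hη : 0 ≤ η) (γ : ℝ) (hγ : 0 ≤ γ) (c : Fin n → ℝ)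
    (X : Matrix (S × A) (Fin n) ℝ) (hX0 : ∀ p j, 0 ≤ X p j)
    (hdiag : ∀ i j : Fin n, i ≠ j → (Xᵀ * diagonal μ * X) i j = 0) :
    ∀ (i : Fin n) (y z : Fin n → ℝ), y i = z i →
      (∀ j : Fin n, j ≠ i → y j ≤ z j) →
      (-((1 + η) • ((Xᵀ * diagonal μ * X) *ᵥ y)) +
          γ • ((Xᵀ * diagonal μ * P) *ᵥ greedyMax (X *ᵥ y)) + c) i ≤
        (-((1 + η) • ((Xᵀ * diagonal μ * X) *ᵥ z)) +
          γ • ((Xᵀ * diagonal μ * P) *ᵥ greedyMax (X *ᵥ z)) + c) i := by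
  intro i y z hyz hle
  -- y ≤ z componentwise
  have hyz' : ∀ j, y j ≤ z j := by
    intro j
    by_cases hj : j = i
    · subst hj; exact le_of_eq hyz
    · exact hle j hj
  -- linear term is equal in coordinate i
  have hlin : ((Xᵀ * diagonal μ * X) *ᵥ y) i = ((Xᵀ * diagonal μ * X) *ᵥ z) i := by
    simp only [mulVec, dotProduct]
    apply Finset.sum_congr rfl
    intro j _
    by_cases hj : i = j
    · subst hj; rw [hyz]
    · rw [hdiag i j hj]; ring
  -- greedyMax monotone step: X *ᵥ y ≤ X *ᵥ z
  have hXv : ∀ p, (X *ᵥ y) p ≤ (X *ᵥ z) p := by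
    intro p
    simp only [mulVec, dotProduct]
    exact Finset.sum_le_sum fun j _ => mul_le_mul_of_nonneg_left (hyz' j) (hX0 p j)
  have hB : ∀ s, greedyMax (X *ᵥ y) s ≤ greedyMax (X *ᵥ z) s := by
    intro s
    apply Finset.sup'_le
    intro a _
    exact le_trans (hXv (s, a)) (Finset.le_sup' (fun a => (X *ᵥ z) (s, a)) (Finset.mem_univ a))
  -- second term monotone
  have hM : ∀ s, 0 ≤ (Xᵀ * diagonal μ * P) i s := by
    intro s
    simp only [Matrix.mul_apply, transpose_apply]
    apply Finset.sum_nonneg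
    intro p _
    apply mul_nonneg _ (hP0 p s)
    apply Finset.sum_nonneg
    intro q _
    rcases eq_or_ne p q with rfl | hpq
    · rw [diagonal_apply_eq]
      exact mul_nonneg (hX0 p i) (hμ p).le
    · simp [diagonal_apply_ne _ hpq.symm]
  have h2 : ((Xᵀ * diagonal μ * P) *ᵥ greedyMax (X *ᵥ y)) i ≤
      ((Xᵀ * diagonal μ * P) *ᵥ greedyMax (X *ᵥ z)) i := by
    simp only [mulVec, dotProduct]
    exact Finset.sum_le_sum fun s _ => mul_le_mul_of_nonneg_left (hB s) (hM s)
  simp only [Pi.add_apply, Pi.neg_apply, Pi.smul_apply, smul_eq_mul]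
  rw [hlin]
  have := mul_le_mul_of_nonneg_left h2 hγ
  linarith
end

section
/- Let S and A be nonempty finite sets, μ : S×A → ℝ with 0 < μ(s,a) ≤ 1 for all (s,a), D = diag(μ), P a row-stochastic (S×A)×S real matrix, R : S×A → ℝ, γ ∈ (0,1), and X a real (S×A)×n matrix with nonnegative entries and full column rank such that XᵀDX is diagonal. Define B : ℝ^{S×A} → ℝ^{S} by (Bq)(s) = max_{a∈A} q(s,a) and f(θ) = −(1+η) XᵀDX θ + γ XᵀD P B(Xθ) + XᵀDR. Suppose η satisfies both (i) η > max_{π,(s,a)} [ γ (μᵀ P Π_π)(s,a) / (2 μ(s,a)) ] − (2−γ)/2, where the max is over all deterministic policies π : S → A and all (s,a) ∈ S×A, and (ii) 1 + η ≥ ‖(XᵀDX)^{-1}‖_∞ · ‖Xᵀ‖_∞ · ‖X‖_∞. Then f has a unique zero θ_e ∈ ℝⁿ, and every differentiable θ : [0,∞) → ℝⁿ with θ′(t) = f(θ(t)) for all t ≥ 0 satisfies θ(t) → θ_e as t → ∞ (θ_e is the globally asymptotically stable equilibrium of the mean ODE of regularized Q-learning). -/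
open Matrix Filter Set

attribute [local instance] Matrix.linftyOpNormedAddCommGroup

/-- The mean ODE vector field of regularized Q-learning,
`f(θ) = −(1+η) XᵀDX θ + γ XᵀD P B(Xθ) + XᵀDR`. -/
noncomputable def meanField {S A : Type*} [Fintype S] [Fintype A] [Nonempty A]
    [DecidableEq S] [DecidableEq A] {n : ℕ}
    (μ : S × A → ℝ) (P : Matrix (S × A) S ℝ) (R : S × A → ℝ) (γ η : ℝ)
    (X : Matrix (S × A) (Fin n) ℝ) (θ : Fin n → ℝ) : Fin n → ℝ :=
  -((1 + η) • ((Xᵀ * diagonal μ * X) *ᵥ θ)) +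
    γ • ((Xᵀ * diagonal μ * P) *ᵥ greedyMax (X *ᵥ θ)) + (Xᵀ * diagonal μ) *ᵥ R

lemma aux_rowsum_le {m' n' : Type*} [Fintype m'] [Fintype n'] (A : Matrix m' n' ℝ) (i : m') :
    ∑ j, |A i j| ≤ ‖A‖ := by
  rw [Matrix.linfty_opNorm_def]
  have h : (∑ j, ‖A i j‖₊) ≤ (Finset.univ : Finset m').sup fun i => ∑ j, ‖A i j‖₊ :=
    Finset.le_sup (f := fun i => ∑ j, ‖A i j‖₊) (Finset.mem_univ i)
  calc ∑ j, |A i j| = ((∑ j, ‖A i j‖₊ : NNReal) : ℝ) := by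
        push_cast; simp [Real.norm_eq_abs]
    _ ≤ _ := by exact_mod_cast h

lemma aux_entry_le {m' n' : Type*} [Fintype m'] [Fintype n'] (A : Matrix m' n' ℝ) (i : m') (j : n') :
    |A i j| ≤ ‖A‖ :=
  le_trans (Finset.single_le_sum (fun k _ => abs_nonneg (A i k)) (Finset.mem_univ j))
    (aux_rowsum_le A i)

lemma aux_abs_add_le_max {a b : ℝ} (ha : 0 ≤ a) : |a + b| ≤ max (a + b) |b| := by
  rcases le_or_gt 0 (a + b) with h | h
  · rw [abs_of_nonneg h]; exact le_max_left _ _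
  · rw [abs_of_neg h]
    refine le_max_of_le_right ?_
    have : -b ≤ |b| := neg_le_abs b
    linarith

lemma aux_greedy_lip {S A : Type*} [Fintype S] [Fintype A] [Nonempty A]
    (q q' : S × A → ℝ) (s : S) : |greedyMax q s - greedyMax q' s| ≤ ‖q - q'‖ := by
  have key : ∀ f g : S × A → ℝ, greedyMax f s - greedyMax g s ≤ ‖f - g‖ := by
    intro f g
    rw [sub_le_iff_le_add]
    unfold greedyMax
    refine Finset.sup'_le _ _ fun a _ => ?_
    have h1 : |f (s, a) - g (s, a)| ≤ ‖f - g‖ := by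
      have := norm_le_pi_norm (f - g) (s, a)
      simpa [Real.norm_eq_abs] using this
    have h2 : g (s, a) ≤ Finset.univ.sup' Finset.univ_nonempty fun a => g (s, a) :=
      Finset.le_sup' (fun a => g (s, a)) (Finset.mem_univ a)
    have := abs_le.1 h1
    linarith [this.2]
  rw [abs_le]
  constructor
  · have := key q' q
    rw [show ‖q' - q‖ = ‖q - q'‖ from norm_sub_rev _ _] at this
    linarith
  · exact key q q'

set_option maxHeartbeats 1600000 in
/-- Under the regularization conditions on `η`, the mean ODE field `f` of regularized
Q-learning has a unique zero `θ_e`, which is the globally asymptotically stable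
equilibrium of the ODE `θ′ = f(θ)`. -/
theorem stmt_14 {S A : Type*} [Fintype S] [Fintype A] [Nonempty S] [Nonempty A]
    [DecidableEq S] [DecidableEq A] {n : ℕ}
    (μ : S × A → ℝ) (hμ : ∀ p, 0 < μ p ∧ μ p ≤ 1)
    (P : Matrix (S × A) S ℝ) (hP0 : ∀ p s, 0 ≤ P p s) (hP1 : ∀ p, ∑ s, P p s = 1)
    (R : S × A → ℝ) (γ : ℝ) (hγ : γ ∈ Set.Ioo (0 : ℝ) 1)
    (X : Matrix (S × A) (Fin n) ℝ) (hX0 : ∀ p j, 0 ≤ X p j)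
    (hXrank : Function.Injective X.mulVec)
    (hdiag : ∀ i j : Fin n, i ≠ j → (Xᵀ * diagonal μ * X) i j = 0)
    (Pi : (S → A) → Matrix S (S × A) ℝ)
    (hPi : ∀ (π : S → A) (s : S) (p : S × A),
      Pi π s p = if p.1 = s ∧ p.2 = π s then 1 else 0)
    (η : ℝ) (hη0 : 0 ≤ η)
    (hη1 : η > (Finset.univ.sup' Finset.univ_nonempty
        fun q : (S → A) × (S × A) =>
          γ * (μ ᵥ* (P * Pi q.1)) q.2 / (2 * μ q.2)) - (2 - γ) / 2)
    (hη2 : ‖(Xᵀ * diagonal μ * X)⁻¹‖ * ‖Xᵀ‖ * ‖X‖ ≤ 1 + η) :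
    ∃ θe : Fin n → ℝ,
      meanField μ P R γ η X θe = 0 ∧
      (∀ θ' : Fin n → ℝ, meanField μ P R γ η X θ' = 0 → θ' = θe) ∧
      (∀ θ : ℝ → Fin n → ℝ,
        (∀ t : ℝ, 0 ≤ t → HasDerivAt θ (meanField μ P R γ η X (θ t)) t) →
        Filter.Tendsto θ Filter.atTop (nhds θe)) := by
  obtain ⟨hγ0, hγ1⟩ := hγ
  set M : Matrix (Fin n) (Fin n) ℝ := Xᵀ * diagonal μ * X with hMdef
  set N : Matrix (Fin n) S ℝ := Xᵀ * diagonal μ * P with hNdef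
  set c : Fin n → ℝ := (Xᵀ * diagonal μ) *ᵥ R with hcdef
  set m : Fin n → ℝ := fun j => M j j with hmdef
  -- entries
  have hMapp : ∀ i j, M i j = ∑ p, X p i * μ p * X p j := by
    intro i j
    rw [hMdef, Matrix.mul_apply]
    refine Finset.sum_congr rfl fun p _ => ?_
    rw [Matrix.mul_diagonal, Matrix.transpose_apply]
  have hm_pos : ∀ j, 0 < m j := by
    intro j
    have hmj : m j = ∑ p, X p j * μ p * X p j := hMapp j j
    have hcol : ∃ p, X p j ≠ 0 := by
      by_contra h
      push_neg at h
      have h1 : X.mulVec (_root_.Pi.single j 1) = X.mulVec 0 := by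
        rw [Matrix.mulVec_single, Matrix.mulVec_zero]
        funext p; simp [h p]
      have := congrFun (hXrank h1) j
      simp at this
    obtain ⟨p₀, hp₀⟩ := hcol
    rw [hmj]
    refine Finset.sum_pos' (fun p _ => by nlinarith [(hμ p).1, hX0 p j, sq_nonneg (X p j)]) ?_
    refine ⟨p₀, Finset.mem_univ _, ?_⟩
    have hx : 0 < X p₀ j := lt_of_le_of_ne (hX0 p₀ j) (Ne.symm hp₀)
    exact mul_pos (mul_pos hx (hμ p₀).1) hx
  have hm_ne : ∀ j, m j ≠ 0 := fun j => (hm_pos j).ne'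
  have hMdiag : M = diagonal m := by
    ext i j
    by_cases h : i = j
    · subst h; simp [Matrix.diagonal_apply_eq, hmdef]
    · rw [Matrix.diagonal_apply_ne _ h]; exact hdiag i j h
  have hMinv : M⁻¹ = diagonal fun j => (m j)⁻¹ := by
    apply Matrix.inv_eq_right_inv
    rw [hMdiag, Matrix.diagonal_mul_diagonal]
    rw [show (fun i => m i * (m i)⁻¹) = fun _ => (1 : ℝ) from
      funext fun i => mul_inv_cancel₀ (hm_ne i)]
    exact Matrix.diagonal_one
  have hMinv_norm : ∀ j, (m j)⁻¹ ≤ ‖M⁻¹‖ := by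
    intro j
    rw [hMinv]
    have h := aux_entry_le (diagonal fun j => (m j)⁻¹) j j
    rwa [Matrix.diagonal_apply_eq, abs_of_nonneg (inv_nonneg.2 (hm_pos j).le)] at h
  have hηpos : (0:ℝ) < 1 + η := by linarith
  have hηm : ∀ j, 0 < (1 + η) * m j := fun j => mul_pos hηpos (hm_pos j)
  have hXX : ∀ j, ‖Xᵀ‖ * ‖X‖ ≤ (1 + η) * m j := by
    intro j
    have h1 := hMinv_norm j
    have h2 : (m j)⁻¹ * (‖Xᵀ‖ * ‖X‖) ≤ ‖M⁻¹‖ * (‖Xᵀ‖ * ‖X‖) :=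
      mul_le_mul_of_nonneg_right h1 (mul_nonneg (norm_nonneg _) (norm_nonneg _))
    have h3 : ‖M⁻¹‖ * (‖Xᵀ‖ * ‖X‖) ≤ 1 + η := by rw [← mul_assoc]; exact hη2
    have h4 := mul_le_mul_of_nonneg_left (h2.trans h3) (hm_pos j).le
    calc ‖Xᵀ‖ * ‖X‖ = m j * ((m j)⁻¹ * (‖Xᵀ‖ * ‖X‖)) := by
          rw [← mul_assoc, mul_inv_cancel₀ (hm_ne j), one_mul]
      _ ≤ m j * (1 + η) := h4
      _ = (1 + η) * m j := mul_comm _ _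
  -- N entries
  have hNapp : ∀ j s, N j s = ∑ p, X p j * μ p * P p s := by
    intro j s
    rw [hNdef, Matrix.mul_apply]
    refine Finset.sum_congr rfl fun p _ => ?_
    rw [Matrix.mul_diagonal, Matrix.transpose_apply]
  have hN0 : ∀ j s, 0 ≤ N j s := by
    intro j s
    rw [hNapp]
    exact Finset.sum_nonneg fun p _ =>
      mul_nonneg (mul_nonneg (hX0 p j) (hμ p).1.le) (hP0 p s)
  have hNsum : ∀ j, ∑ s, N j s ≤ ‖Xᵀ‖ := by
    intro j
    have h1 : ∑ s, N j s = ∑ p, X p j * μ p := by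
      simp_rw [hNapp]
      rw [Finset.sum_comm]
      refine Finset.sum_congr rfl fun p _ => ?_
      rw [← Finset.mul_sum, hP1, mul_one]
    rw [h1]
    have h2 : ∑ p, X p j * μ p ≤ ∑ p, |Xᵀ j p| := by
      refine Finset.sum_le_sum fun p _ => ?_
      rw [Matrix.transpose_apply, abs_of_nonneg (hX0 p j)]
      nlinarith [hX0 p j, (hμ p).1, (hμ p).2]
    exact h2.trans (aux_rowsum_le Xᵀ j)
  -- key Lipschitz estimate, coordinatewise
  have key : ∀ (θ₁ θ₂ : Fin n → ℝ) (j : Fin n),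
      |(N *ᵥ greedyMax (X *ᵥ θ₁)) j - (N *ᵥ greedyMax (X *ᵥ θ₂)) j|
        ≤ (1 + η) * m j * ‖θ₁ - θ₂‖ := by
    intro θ₁ θ₂ j
    have hw : ∀ s, |greedyMax (X *ᵥ θ₁) s - greedyMax (X *ᵥ θ₂) s| ≤ ‖X‖ * ‖θ₁ - θ₂‖ := by
      intro s
      calc |greedyMax (X *ᵥ θ₁) s - greedyMax (X *ᵥ θ₂) s|
          ≤ ‖X *ᵥ θ₁ - X *ᵥ θ₂‖ := aux_greedy_lip _ _ s
        _ = ‖X *ᵥ (θ₁ - θ₂)‖ := by rw [Matrix.mulVec_sub]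
        _ ≤ ‖X‖ * ‖θ₁ - θ₂‖ := Matrix.linfty_opNorm_mulVec _ _
    have hdiff : (N *ᵥ greedyMax (X *ᵥ θ₁)) j - (N *ᵥ greedyMax (X *ᵥ θ₂)) j
        = ∑ s, N j s * (greedyMax (X *ᵥ θ₁) s - greedyMax (X *ᵥ θ₂) s) := by
      simp [Matrix.mulVec, dotProduct, mul_sub, Finset.sum_sub_distrib]
    rw [hdiff]
    have hnn : (0:ℝ) ≤ ‖X‖ * ‖θ₁ - θ₂‖ := mul_nonneg (norm_nonneg _) (norm_nonneg _)
    calc |∑ s, N j s * (greedyMax (X *ᵥ θ₁) s - greedyMax (X *ᵥ θ₂) s)|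
        ≤ ∑ s, |N j s * (greedyMax (X *ᵥ θ₁) s - greedyMax (X *ᵥ θ₂) s)| :=
          Finset.abs_sum_le_sum_abs _ _
      _ ≤ ∑ s, N j s * (‖X‖ * ‖θ₁ - θ₂‖) := by
          refine Finset.sum_le_sum fun s _ => ?_
          rw [abs_mul, abs_of_nonneg (hN0 j s)]
          exact mul_le_mul_of_nonneg_left (hw s) (hN0 j s)
      _ = (∑ s, N j s) * (‖X‖ * ‖θ₁ - θ₂‖) := by rw [← Finset.sum_mul]
      _ ≤ ‖Xᵀ‖ * (‖X‖ * ‖θ₁ - θ₂‖) := mul_le_mul_of_nonneg_right (hNsum j) hnn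
      _ = ‖Xᵀ‖ * ‖X‖ * ‖θ₁ - θ₂‖ := by ring
      _ ≤ (1 + η) * m j * ‖θ₁ - θ₂‖ :=
          mul_le_mul_of_nonneg_right (hXX j) (norm_nonneg _)
  -- coordinate form of meanField
  have hcomp : ∀ (θ' : Fin n → ℝ) (j : Fin n),
      meanField μ P R γ η X θ' j
        = -((1 + η) * (m j * θ' j)) + γ * (N *ᵥ greedyMax (X *ᵥ θ')) j + c j := by
    intro θ' j
    have hMv : (M *ᵥ θ') j = m j * θ' j := by
      rw [hMdiag]; exact Matrix.mulVec_diagonal _ _ _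
    simp only [meanField, ← hMdef, ← hNdef, ← hcdef, _root_.Pi.add_apply, _root_.Pi.neg_apply,
      _root_.Pi.smul_apply, smul_eq_mul, hMv]
  -- the contraction map
  set G : (Fin n → ℝ) → Fin n → ℝ :=
    fun θ' j => ((1 + η) * m j)⁻¹ * (γ * (N *ᵥ greedyMax (X *ᵥ θ')) j + c j) with hGdef
  have hGapp : ∀ (θ' : Fin n → ℝ) (j : Fin n),
      G θ' j = ((1 + η) * m j)⁻¹ * (γ * (N *ᵥ greedyMax (X *ᵥ θ')) j + c j) := fun _ _ => rfl
  have hiff : ∀ θ' : Fin n → ℝ, meanField μ P R γ η X θ' = 0 ↔ G θ' = θ' := by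
    intro θ'
    constructor
    · intro h
      funext j
      have hj := congrFun h j
      rw [hcomp θ' j] at hj
      simp only [_root_.Pi.zero_apply] at hj
      rw [hGapp]
      have h2 : γ * (N *ᵥ greedyMax (X *ᵥ θ')) j + c j = (1 + η) * m j * θ' j := by
        nlinarith [hj]
      rw [h2, ← mul_assoc, inv_mul_cancel₀ (hηm j).ne', one_mul]
    · intro h
      funext j
      have hj := congrFun h j
      rw [hGapp] at hj
      rw [hcomp θ' j]
      simp only [_root_.Pi.zero_apply]
      have h2 : γ * (N *ᵥ greedyMax (X *ᵥ θ')) j + c j = (1 + η) * m j * θ' j := by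
        rw [← hj, ← mul_assoc, mul_inv_cancel₀ (hηm j).ne', one_mul]
      nlinarith [h2]
  have hG_lip : ∀ θ₁ θ₂ : Fin n → ℝ, dist (G θ₁) (G θ₂) ≤ γ * dist θ₁ θ₂ := by
    intro θ₁ θ₂
    rw [dist_eq_norm, dist_eq_norm]
    refine (pi_norm_le_iff_of_nonneg (mul_nonneg hγ0.le (norm_nonneg _))).2 fun j => ?_
    have hGj : (G θ₁ - G θ₂) j = ((1 + η) * m j)⁻¹ *
        (γ * ((N *ᵥ greedyMax (X *ᵥ θ₁)) j - (N *ᵥ greedyMax (X *ᵥ θ₂)) j)) := by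
      have h0 : (G θ₁ - G θ₂) j = G θ₁ j - G θ₂ j := rfl
      rw [h0, hGapp, hGapp]; ring
    rw [Real.norm_eq_abs, hGj, abs_mul, abs_mul,
      abs_of_nonneg (inv_nonneg.2 (hηm j).le), abs_of_nonneg hγ0.le]
    calc ((1 + η) * m j)⁻¹ * (γ * |(N *ᵥ greedyMax (X *ᵥ θ₁)) j - (N *ᵥ greedyMax (X *ᵥ θ₂)) j|)
        ≤ ((1 + η) * m j)⁻¹ * (γ * ((1 + η) * m j * ‖θ₁ - θ₂‖)) := by
          refine mul_le_mul_of_nonneg_left ?_ (inv_nonneg.2 (hηm j).le)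
          exact mul_le_mul_of_nonneg_left (key θ₁ θ₂ j) hγ0.le
      _ = (((1 + η) * m j)⁻¹ * ((1 + η) * m j)) * (γ * ‖θ₁ - θ₂‖) := by ring
      _ = γ * ‖θ₁ - θ₂‖ := by rw [inv_mul_cancel₀ (hηm j).ne', one_mul]
  set K : NNReal := ⟨γ, hγ0.le⟩ with hKdef
  have hK1 : K < 1 := by exact_mod_cast hγ1
  have hC : ContractingWith K G :=
    ⟨hK1, LipschitzWith.of_dist_le_mul fun x y => hG_lip x y⟩
  set θe : Fin n → ℝ := ContractingWith.fixedPoint G hC with hθedef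
  have hθe_fix : G θe = θe := hC.fixedPoint_isFixedPt
  have hθe_zero : meanField μ P R γ η X θe = 0 := (hiff θe).2 hθe_fix
  refine ⟨θe, hθe_zero, fun θ' h => hC.fixedPoint_unique ((hiff θ').1 h), ?_⟩
  -- ODE convergence part
  intro θ hθ
  obtain ⟨κ, hκ0, hκm⟩ : ∃ κ : ℝ, 0 < κ ∧ ∀ j, κ ≤ (1 - γ) * ((1 + η) * m j) := by
    rcases isEmpty_or_nonempty (Fin n) with he | hne
    · exact ⟨1, one_pos, fun j => (IsEmpty.elim he j)⟩
    · refine ⟨Finset.univ.inf' Finset.univ_nonempty (fun j => (1 - γ) * ((1 + η) * m j)),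
        ?_, fun j => Finset.inf'_le _ (Finset.mem_univ j)⟩
      rw [Finset.lt_inf'_iff]
      exact fun j _ => mul_pos (by linarith) (hηm j)
  set v : ℝ → ℝ := fun t => ‖θ t - θe‖ with hvdef
  have hv_eq : ∀ x : ℝ, v x = ‖θ x - θe‖ := fun _ => rfl
  -- coordinatewise bound on the field near θe
  have keyd : ∀ (ψ : Fin n → ℝ) (j : Fin n),
      |meanField μ P R γ η X ψ j + (1 + η) * m j * (ψ j - θe j)|
        ≤ γ * ((1 + η) * m j) * ‖ψ - θe‖ := by
    intro ψ j
    have h1 := hcomp ψ j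
    have h3 : meanField μ P R γ η X θe j = 0 := by rw [hθe_zero]; rfl
    rw [hcomp θe j] at h3
    have h4 : meanField μ P R γ η X ψ j + (1 + η) * m j * (ψ j - θe j)
        = γ * ((N *ᵥ greedyMax (X *ᵥ ψ)) j - (N *ᵥ greedyMax (X *ᵥ θe)) j) := by
      rw [h1]; linear_combination h3
    rw [h4, abs_mul, abs_of_nonneg hγ0.le]
    calc γ * |(N *ᵥ greedyMax (X *ᵥ ψ)) j - (N *ᵥ greedyMax (X *ᵥ θe)) j|
        ≤ γ * ((1 + η) * m j * ‖ψ - θe‖) :=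
          mul_le_mul_of_nonneg_left (key ψ θe j) hγ0.le
      _ = γ * ((1 + η) * m j) * ‖ψ - θe‖ := by ring
  -- the one-sided Dini derivative bound for Gronwall
  have hf' : ∀ t : ℝ, 0 ≤ t → ∀ r : ℝ, -κ * v t < r →
      ∃ᶠ z in nhdsWithin t (Set.Ioi t), (z - t)⁻¹ * (v z - v t) < r := by
    intro t ht0 r hr
    have hdt := hθ t ht0
    refine Filter.Eventually.frequently ?_
    rcases eq_or_lt_of_le (norm_nonneg (θ t - θe)) with hv0 | hvt
    · -- at the equilibrium
      have hte : θ t = θe := by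
        have h5 : ‖θ t - θe‖ = 0 := hv0.symm
        rwa [norm_eq_zero, sub_eq_zero] at h5
      have hvt0 : v t = 0 := by rw [hv_eq, ← hv0]
      have hr0 : 0 < r := by rw [hvt0, mul_zero] at hr; exact hr
      have hd0 : HasDerivAt θ 0 t := by rw [hte, hθe_zero] at hdt; exact hdt
      have hlit := ((hasDerivAt_iff_isLittleO.1 hd0).def (show (0:ℝ) < r/2 by linarith)).filter_mono
        (nhdsWithin_le_nhds : nhdsWithin t (Set.Ioi t) ≤ nhds t)
      filter_upwards [hlit, self_mem_nhdsWithin] with z hz hz'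
      have hzt : 0 < z - t := sub_pos.2 hz'
      have hvz : v z ≤ r/2 * (z - t) := by
        rw [hv_eq, ← hte]
        calc ‖θ z - θ t‖ = ‖θ z - θ t - (z - t) • (0 : Fin n → ℝ)‖ := by rw [smul_zero, sub_zero]
          _ ≤ r/2 * ‖z - t‖ := hz
          _ = r/2 * (z - t) := by rw [Real.norm_eq_abs, abs_of_pos hzt]
      have h8 : (z - t)⁻¹ * (v z - v t) ≤ r/2 := by
        calc (z - t)⁻¹ * (v z - v t) ≤ (z - t)⁻¹ * (r/2 * (z - t)) := by
              refine mul_le_mul_of_nonneg_left ?_ (inv_nonneg.2 hzt.le)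
              rw [hvt0]; linarith
          _ = r/2 := by field_simp
      linarith
    · -- away from the equilibrium
      have hvtpos : 0 < v t := by rw [hv_eq]; exact hvt
      have hnFin : Nonempty (Fin n) := by
        rcases isEmpty_or_nonempty (Fin n) with he | h
        · exfalso
          have h9 : θ t - θe = 0 := Subsingleton.elim _ _
          rw [h9, norm_zero] at hvt
          exact lt_irrefl 0 hvt
        · exact h
      set d : Fin n → ℝ := meanField μ P R γ η X (θ t) with hddef
      set ρ : ℝ := (r + κ * v t)/2 with hρdef
      have hρ0 : 0 < ρ := by rw [hρdef]; linarith
      have hr' : -κ * v t + ρ < r := by rw [hρdef]; linarith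
      have hlit := ((hasDerivAt_iff_isLittleO.1 hdt).def hρ0).filter_mono
        (nhdsWithin_le_nhds : nhdsWithin t (Set.Ioi t) ≤ nhds t)
      have hcoord : ∀ k : Fin n, ∀ᶠ z in nhdsWithin t (Set.Ioi t),
          |θ z k - θe k| ≤ v t + (z - t) * (-κ * v t + ρ) := by
        intro k
        have hle' : |θ t k - θe k| ≤ v t := by
          have h10 := norm_le_pi_norm (θ t - θe) k
          rw [hv_eq]
          simpa [Real.norm_eq_abs] using h10
        set s : ℝ := if 0 ≤ θ t k - θe k then 1 else -1 with hsdef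
        have hs_abs : s * (θ t k - θe k) = |θ t k - θe k| := by
          rw [hsdef]; split_ifs with h
          · rw [one_mul, abs_of_nonneg h]
          · rw [neg_one_mul, abs_of_neg (lt_of_not_ge h)]
        have hs1 : |s| = 1 := by rw [hsdef]; split_ifs <;> simp
        have hsd : s * d k ≤ γ * ((1 + η) * m k) * v t - (1 + η) * m k * |θ t k - θe k| := by
          have h1 := keyd (θ t) k
          rw [← hv_eq] at h1
          have h2 : s * (d k + (1 + η) * m k * (θ t k - θe k))
              ≤ |d k + (1 + η) * m k * (θ t k - θe k)| := by
            calc s * (d k + (1 + η) * m k * (θ t k - θe k))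
                ≤ |s * (d k + (1 + η) * m k * (θ t k - θe k))| := le_abs_self _
              _ = |s| * |d k + (1 + η) * m k * (θ t k - θe k)| := abs_mul _ _
              _ = |d k + (1 + η) * m k * (θ t k - θe k)| := by rw [hs1, one_mul]
          have h3 : s * d k + (1 + η) * m k * (s * (θ t k - θe k))
              ≤ γ * ((1 + η) * m k) * v t := by
            calc s * d k + (1 + η) * m k * (s * (θ t k - θe k))
                = s * (d k + (1 + η) * m k * (θ t k - θe k)) := by ring
              _ ≤ |d k + (1 + η) * m k * (θ t k - θe k)| := h2
              _ ≤ γ * ((1 + η) * m k) * v t := h1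
          rw [hs_abs] at h3
          linarith
        have hDk : |d k| ≤ ‖d‖ := by
          simpa [Real.norm_eq_abs] using norm_le_pi_norm d k
        set ck : ℝ := if |θ t k - θe k| = v t then v t else v t - |θ t k - θe k| with hckdef
        have hck : 0 < ck := by
          rw [hckdef]; split_ifs with h
          · exact hvtpos
          · have : |θ t k - θe k| < v t := lt_of_le_of_ne hle' h
            linarith
        have hckle : ck ≤ v t := by
          rw [hckdef]; split_ifs with h
          · exact le_rfl
          · linarith [abs_nonneg (θ t k - θe k)]
        have htend : Filter.Tendsto (fun z : ℝ => (z - t) * (‖d‖ + κ * v t))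
            (nhdsWithin t (Set.Ioi t)) (nhds 0) := by
          have h0 : Filter.Tendsto (fun z : ℝ => (z - t) * (‖d‖ + κ * v t)) (nhds t)
              (nhds ((t - t) * (‖d‖ + κ * v t))) :=
            (((continuous_id.sub continuous_const).mul continuous_const).continuousAt)
          have h0' := h0.mono_left (nhdsWithin_le_nhds : nhdsWithin t (Set.Ioi t) ≤ nhds t)
          simpa using h0'
        have hev1 := htend.eventually_lt_const hck
        filter_upwards [hev1, hlit, self_mem_nhdsWithin] with z hz1 hz2 hz3
        have hh : 0 < z - t := sub_pos.2 hz3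
        have hz2k : |θ z k - θ t k - (z - t) * d k| ≤ ρ * (z - t) := by
          have h11 := norm_le_pi_norm (θ z - θ t - (z - t) • d) k
          have hcomp' : (θ z - θ t - (z - t) • d) k = θ z k - θ t k - (z - t) * d k := rfl
          rw [hcomp', Real.norm_eq_abs] at h11
          calc |θ z k - θ t k - (z - t) * d k| ≤ ‖θ z - θ t - (z - t) • d‖ := h11
            _ ≤ ρ * ‖z - t‖ := hz2
            _ = ρ * (z - t) := by rw [Real.norm_eq_abs, abs_of_pos hh]
        have htri : |θ z k - θe k| ≤ |(θ t k - θe k) + (z - t) * d k| + ρ * (z - t) := by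
          have h12 : θ z k - θe k
              = ((θ t k - θe k) + (z - t) * d k) + (θ z k - θ t k - (z - t) * d k) := by ring
          rw [h12]
          exact (abs_add_le _ _).trans (by linarith [hz2k])
        have hexp : (z - t) * (‖d‖ + κ * v t) = (z - t) * ‖d‖ + (z - t) * (κ * v t) := by ring
        have hmax : |(θ t k - θe k) + (z - t) * d k| ≤ v t + (z - t) * (-κ * v t) := by
          have heq : s * ((θ t k - θe k) + (z - t) * d k)
              = |θ t k - θe k| + (z - t) * (s * d k) := by rw [← hs_abs]; ring
          have habs : |(θ t k - θe k) + (z - t) * d k|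
              = |(|θ t k - θe k| + (z - t) * (s * d k))| := by
            calc |(θ t k - θe k) + (z - t) * d k|
                = |s| * |(θ t k - θe k) + (z - t) * d k| := by rw [hs1, one_mul]
              _ = |s * ((θ t k - θe k) + (z - t) * d k)| := (abs_mul s _).symm
              _ = |(|θ t k - θe k| + (z - t) * (s * d k))| := by rw [heq]
          rw [habs]
          refine (aux_abs_add_le_max (abs_nonneg (θ t k - θe k))).trans (max_le ?_ ?_)
          · rcases eq_or_ne (|θ t k - θe k|) (v t) with hEq | hNe
            · have h13 : s * d k ≤ -κ * v t := by
                rw [hEq] at hsd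
                have hmul := mul_le_mul_of_nonneg_right (hκm k) hvtpos.le
                linarith [hsd, hmul]
              have h14 := mul_le_mul_of_nonneg_left h13 hh.le
              linarith [hEq]
            · have hck_eq : ck = v t - |θ t k - θe k| := by rw [hckdef, if_neg hNe]
              rw [hck_eq] at hz1
              have hsd' : s * d k ≤ ‖d‖ := by
                calc s * d k ≤ |s * d k| := le_abs_self _
                  _ = |s| * |d k| := abs_mul _ _
                  _ = |d k| := by rw [hs1, one_mul]
                  _ ≤ ‖d‖ := hDk
              have h15 := mul_le_mul_of_nonneg_left hsd' hh.le
              linarith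
          · have h16 : |(z - t) * (s * d k)| = (z - t) * |s * d k| := by
              rw [abs_mul, abs_of_pos hh]
            have h17 : |s * d k| ≤ ‖d‖ := by
              rw [abs_mul, hs1, one_mul]; exact hDk
            have h18 := mul_le_mul_of_nonneg_left h17 hh.le
            rw [h16]
            linarith
        calc |θ z k - θe k| ≤ (v t + (z - t) * (-κ * v t)) + ρ * (z - t) := by
              linarith [htri, hmax]
          _ = v t + (z - t) * (-κ * v t + ρ) := by ring
      have hall := Filter.eventually_all.2 hcoord
      filter_upwards [hall, self_mem_nhdsWithin] with z hz hz3
      have hh : 0 < z - t := sub_pos.2 hz3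
      obtain ⟨k0⟩ := hnFin
      have hrhs0 : 0 ≤ v t + (z - t) * (-κ * v t + ρ) :=
        le_trans (abs_nonneg _) (hz k0)
      have hvz : v z ≤ v t + (z - t) * (-κ * v t + ρ) := by
        rw [hv_eq]
        refine (pi_norm_le_iff_of_nonneg hrhs0).2 fun k => ?_
        have h19 := hz k
        simpa [Real.norm_eq_abs] using h19
      have h20 : (z - t)⁻¹ * (v z - v t) ≤ -κ * v t + ρ := by
        have h21 : v z - v t ≤ (z - t) * (-κ * v t + ρ) := by linarith
        calc (z - t)⁻¹ * (v z - v t) ≤ (z - t)⁻¹ * ((z - t) * (-κ * v t + ρ)) :=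
              mul_le_mul_of_nonneg_left h21 (inv_nonneg.2 hh.le)
          _ = -κ * v t + ρ := by field_simp
      linarith
  -- Gronwall decay estimate
  have hdecay : ∀ b : ℝ, 0 ≤ b → v b ≤ v 0 * Real.exp (-κ * b) := by
    intro b hb
    have hcont : ContinuousOn v (Set.Icc 0 b) := fun t ht =>
      (((hθ t ht.1).continuousAt.sub continuousAt_const).norm).continuousWithinAt
    have hineq := le_gronwallBound_of_liminf_deriv_right_le
      (f := v) (f' := fun t => -κ * v t) (δ := v 0) (K := -κ) (ε := 0) (a := 0) (b := b)
      hcont (fun x hx r hr => hf' x hx.1 r hr) le_rfl (fun x _ => by rw [add_zero])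
    have h := hineq b ⟨hb, le_rfl⟩
    rwa [sub_zero, gronwallBound_ε0] at h
  -- conclude convergence
  have hlim : Filter.Tendsto (fun t : ℝ => v 0 * Real.exp (-κ * t)) Filter.atTop (nhds 0) := by
    have h1 : Filter.Tendsto (fun t : ℝ => κ * t) Filter.atTop Filter.atTop :=
      Filter.Tendsto.const_mul_atTop hκ0 Filter.tendsto_id
    have h2 : Filter.Tendsto (fun t : ℝ => Real.exp (-(κ * t))) Filter.atTop (nhds 0) :=
      Real.tendsto_exp_atBot.comp (Filter.tendsto_neg_atTop_atBot.comp h1)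
    have h3 := h2.const_mul (v 0)
    simpa [neg_mul] using h3
  rw [tendsto_iff_dist_tendsto_zero]
  refine squeeze_zero' (Filter.Eventually.of_forall fun t => dist_nonneg) ?_ hlim
  filter_upwards [Filter.eventually_ge_atTop (0:ℝ)] with t ht
  rw [dist_eq_norm]
  exact hdecay t ht
end
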